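/- arXiv:2510.12321 — 6 statements merged into one kernel-verified Lean document; each statement's English description precedes it below -/
import Mathlib

section
/- If the propensity score is correctly specified, i.e., π(d(X),X) = P(A=d(X)|X) almost surely, then for any measurable outcome-model function Q(X,d(X)), the AIPW functional E[ Y·1{A=d(X)}/π(d(X),X) − (1{A=d(X)} − π(d(X),X))/π(d(X),X) · Q(X,d(X)) ] equals the value V(d) = E[Y(d)]. -/
open MeasureTheory ProbabilityTheory

/-- comap σ-algebra, as an abbreviation to avoid local instance pollution. -/
abbrev aipwComap {Ω β : Type*} [MeasurableSpace β] (f : Ω → β) : MeasurableSpace Ω :=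
  MeasurableSpace.comap f inferInstance

/-- If the propensity score model is correctly specified
(`π(d(X),X) = P(A=d(X)|X)` a.s.), then for any integrable outcome-model function
`Q(X,d(X))` the AIPW functional equals the value `V(d) = E[Y(d)]`. -/
theorem aipw_correct_ps
    {Ω 𝓧 : Type*} [MeasurableSpace Ω] [StandardBorelSpace Ω] [Nonempty Ω]
    [MeasurableSpace 𝓧]
    (μ : Measure Ω) [IsProbabilityMeasure μ]
    (X : Ω → 𝓧) (hX : Measurable X)
    (A : Ω → ℝ) (hA : Measurable A) (hAval : ∀ ω, A ω = 1 ∨ A ω = -1)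
    (Y1 Ym1 Y : Ω → ℝ) (hY1 : Measurable Y1) (hYm1 : Measurable Ym1)
    -- consistency
    (hcons : ∀ ω, Y ω = (if A ω = 1 then Y1 ω else Ym1 ω))
    -- unconfoundedness
    (huncf : CondIndepFun (MeasurableSpace.comap X inferInstance) hX.comap_le
      A (fun ω => (Y1 ω, Ym1 ω)) μ)
    -- treatment rule
    (d : 𝓧 → ℝ) (hd : Measurable d) (hdval : ∀ x, d x = 1 ∨ d x = -1)
    -- working propensity score model evaluated at the rule: π(d(x),x)
    (π : 𝓧 → ℝ) (hπmeas : Measurable π)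
    -- positivity of the working model: 0 < π(d(X),X) < 1 a.s.
    (hπpos : ∀ᵐ ω ∂μ, 0 < π (X ω) ∧ π (X ω) < 1)
    -- correct specification: π(d(X),X) = P(A = d(X) | X) a.s.
    (hcorrect : (fun ω => π (X ω)) =ᵐ[μ]
      μ[(fun ω => if A ω = d (X ω) then (1:ℝ) else 0) |
        MeasurableSpace.comap X inferInstance])
    -- arbitrary (possibly misspecified) outcome model Q(X, d(X))
    (Q : 𝓧 → ℝ) (hQmeas : Measurable Q)
    (hQint : Integrable (fun ω => Q (X ω)) μ)
    -- integrability as needed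
    (hint1 : Integrable (fun ω => if d (X ω) = 1 then Y1 ω else Ym1 ω) μ)
    (hint2 : Integrable (fun ω =>
      Y ω * (if A ω = d (X ω) then (1:ℝ) else 0) / π (X ω)
        - ((if A ω = d (X ω) then (1:ℝ) else 0) - π (X ω)) / π (X ω) * Q (X ω)) μ) :
    ∫ ω, (Y ω * (if A ω = d (X ω) then (1:ℝ) else 0) / π (X ω)
        - ((if A ω = d (X ω) then (1:ℝ) else 0) - π (X ω)) / π (X ω) * Q (X ω)) ∂μ
      = ∫ ω, (if d (X ω) = 1 then Y1 ω else Ym1 ω) ∂μ := by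
  classical
  have hm : aipwComap X ≤ ‹MeasurableSpace Ω› := hX.comap_le
  set W : Ω → ℝ × ℝ := fun ω => (Y1 ω, Ym1 ω) with hW_def
  have hWmeas : Measurable W := hY1.prodMk hYm1
  have hmW : aipwComap W ≤ ‹MeasurableSpace Ω› := hWmeas.comap_le
  have h𝔪 : aipwComap X ⊔ aipwComap W ≤ ‹MeasurableSpace Ω› := sup_le hm hmW
  have hXm : Measurable[aipwComap X] X := measurable_iff_comap_le.mpr le_rfl
  have hWm : Measurable[aipwComap W] W := measurable_iff_comap_le.mpr le_rfl
  -- the indicator of treatment agreement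
  set I : Ω → ℝ := fun ω => if A ω = d (X ω) then (1:ℝ) else 0 with hI_def
  have hI_meas : Measurable I :=
    Measurable.ite (measurableSet_eq_fun hA (hd.comp hX)) measurable_const measurable_const
  have hI_int : Integrable I μ := by
    refine Integrable.mono' (integrable_const (1:ℝ)) hI_meas.aestronglyMeasurable
      (Filter.Eventually.of_forall fun ω => ?_)
    by_cases h : A ω = d (X ω) <;> simp [hI_def, h]
  -- set where the rule assigns treatment 1
  set S : Set Ω := {ω | d (X ω) = 1} with hS_def
  have hSm : MeasurableSet[aipwComap X] S := (hd.comp hXm) (measurableSet_singleton 1)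
  have hSm0 : MeasurableSet S := hm _ hSm
  -- indicators of treatment values
  set indA : ℝ → Ω → ℝ := fun a => (A ⁻¹' {a}).indicator (fun _ => (1:ℝ)) with hindA_def
  have hindA_meas : ∀ a, Measurable (indA a) := fun a =>
    measurable_const.indicator (hA (measurableSet_singleton a))
  have hindA_int : ∀ a, Integrable (indA a) μ := fun a =>
    (integrable_const (1:ℝ)).indicator (hA (measurableSet_singleton a))
  -- pointwise decomposition of the agreement indicator
  have E1 : ∀ ω, I ω = S.indicator (indA 1) ω + Sᶜ.indicator (indA (-1)) ω := by
    intro ω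
    by_cases hω : d (X ω) = 1
    · have hωS : ω ∈ S := hω
      simp [hI_def, hindA_def, Set.indicator_apply, hωS, hω]
    · have hω2 : d (X ω) = -1 := (hdval (X ω)).resolve_left hω
      have hωS : ω ∉ S := hω
      simp [hI_def, hindA_def, Set.indicator_apply, hωS, hω2]
  have hπX_int : Integrable (fun ω => π (X ω)) μ := integrable_condExp.congr hcorrect.symm
  have hπX_meas_m : Measurable[aipwComap X] (fun ω => π (X ω)) := hπmeas.comp hXm
  -- decomposition of the conditional expectation of I given σ(X)
  have hp_decomp : μ[I|aipwComap X] =ᵐ[μ]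
      fun ω => S.indicator (μ[indA 1|aipwComap X]) ω
        + Sᶜ.indicator (μ[indA (-1)|aipwComap X]) ω := by
    have h1 : I = S.indicator (indA 1) + Sᶜ.indicator (indA (-1)) := funext E1
    calc μ[I|aipwComap X]
        = μ[S.indicator (indA 1) + Sᶜ.indicator (indA (-1))|aipwComap X] := by rw [h1]
      _ =ᵐ[μ] μ[S.indicator (indA 1)|aipwComap X] + μ[Sᶜ.indicator (indA (-1))|aipwComap X] :=
          condExp_add ((hindA_int 1).indicator hSm0) ((hindA_int (-1)).indicator hSm0.compl) _
      _ =ᵐ[μ] fun ω => S.indicator (μ[indA 1|aipwComap X]) ω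
          + Sᶜ.indicator (μ[indA (-1)|aipwComap X]) ω := by
          have e1 := condExp_indicator (m := aipwComap X) (hindA_int 1) hSm
          have e2 := condExp_indicator (m := aipwComap X) (hindA_int (-1)) hSm.compl
          filter_upwards [e1, e2] with ω h1 h2
          simp only [Pi.add_apply, h1, h2]
  -- KEY: conditional expectation of I given the larger σ-algebra is still π(X)
  have hC : (fun ω => π (X ω)) =ᵐ[μ] μ[I|aipwComap X ⊔ aipwComap W] := by
    refine ae_eq_condExp_of_forall_setIntegral_eq h𝔪 hI_int
      (fun s _ _ => hπX_int.integrableOn) (fun s hs _ => ?_)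
      ((hπX_meas_m.mono (le_sup_left : aipwComap X ≤ aipwComap X ⊔ aipwComap W) le_rfl).stronglyMeasurable.aestronglyMeasurable (μ := μ))
    -- characterize the sup σ-algebra by a π-system
    have h_eq : (aipwComap X ⊔ aipwComap W : MeasurableSpace Ω) = MeasurableSpace.generateFrom
        {u : Set Ω | ∃ s t, MeasurableSet[aipwComap X] s ∧ MeasurableSet[aipwComap W] t
          ∧ u = s ∩ t} := by
      refine le_antisymm (sup_le ?_ ?_) (MeasurableSpace.generateFrom_le ?_)
      · exact fun u hu => MeasurableSpace.measurableSet_generateFrom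
          ⟨u, Set.univ, hu, MeasurableSet.univ, (Set.inter_univ u).symm⟩
      · exact fun u hu => MeasurableSpace.measurableSet_generateFrom
          ⟨Set.univ, u, MeasurableSet.univ, hu, (Set.univ_inter u).symm⟩
      · rintro u ⟨s', t', hs', ht', rfl⟩
        exact ((le_sup_left : aipwComap X ≤ aipwComap X ⊔ aipwComap W) _ hs').inter
          ((le_sup_right : aipwComap W ≤ aipwComap X ⊔ aipwComap W) _ ht')
    have hPi : IsPiSystem {u : Set Ω | ∃ s t, MeasurableSet[aipwComap X] s
        ∧ MeasurableSet[aipwComap W] t ∧ u = s ∩ t} := by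
      rintro u ⟨s1, t1, hs1, ht1, rfl⟩ v ⟨s2, t2, hs2, ht2, rfl⟩ -
      exact ⟨s1 ∩ s2, t1 ∩ t2, hs1.inter hs2, ht1.inter ht2, by
        rw [Set.inter_inter_inter_comm]⟩
    have hempty : ∫ ω in (∅ : Set Ω), π (X ω) ∂μ = ∫ ω in (∅ : Set Ω), I ω ∂μ := by simp
    have hbasic : ∀ u ∈ {u : Set Ω | ∃ s t, MeasurableSet[aipwComap X] s
        ∧ MeasurableSet[aipwComap W] t ∧ u = s ∩ t},
        ∫ ω in u, π (X ω) ∂μ = ∫ ω in u, I ω ∂μ := by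
      rintro u ⟨s, t, hs, ht, rfl⟩
      rw [MeasurableSpace.measurableSet_comap] at ht
      obtain ⟨B, hB, rfl⟩ := ht
      have htm0 : MeasurableSet (W ⁻¹' B) := hWmeas hB
      have hs0 : MeasurableSet s := hm _ hs
      have hindT_int : Integrable ((W ⁻¹' B).indicator (fun _ => (1:ℝ))) μ :=
        (integrable_const 1).indicator htm0
      have fact : ∀ a : ℝ,
          μ[(A ⁻¹' {a} ∩ W ⁻¹' B).indicator (fun _ => (1:ℝ))|aipwComap X] =ᵐ[μ]
          fun ω => (μ[indA a|aipwComap X]) ω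
            * (μ[(W ⁻¹' B).indicator (fun _ => (1:ℝ))|aipwComap X]) ω := by
        intro a
        exact (condIndepFun_iff_condExp_inter_preimage_eq_mul
          (m' := aipwComap X) (hm' := hX.comap_le) hA hWmeas).mp huncf {a} B
          (measurableSet_singleton a) hB
      have key : ∀ (a : ℝ) (s' : Set Ω), MeasurableSet[aipwComap X] s' →
          ∫ ω in s' ∩ W ⁻¹' B, indA a ω ∂μ
            = ∫ ω in s' ∩ W ⁻¹' B, (μ[indA a|aipwComap X]) ω ∂μ := by
        intro a s' hs'
        have hs'0 : MeasurableSet s' := hm _ hs'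
        have hintAB : Integrable ((A ⁻¹' {a} ∩ W ⁻¹' B).indicator (fun _ => (1:ℝ))) μ :=
          (integrable_const 1).indicator ((hA (measurableSet_singleton a)).inter htm0)
        have lhs_eq : ∫ ω in s' ∩ W ⁻¹' B, indA a ω ∂μ
            = ∫ ω in s', (μ[indA a|aipwComap X]) ω
                * (μ[(W ⁻¹' B).indicator (fun _ => (1:ℝ))|aipwComap X]) ω ∂μ := by
          rw [← setIntegral_indicator htm0]
          have hii : (W ⁻¹' B).indicator (indA a)
              = (A ⁻¹' {a} ∩ W ⁻¹' B).indicator (fun _ => (1:ℝ)) := by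
            rw [hindA_def, Set.indicator_indicator, Set.inter_comm]
          rw [hii, ← setIntegral_condExp hm hintAB hs']
          exact setIntegral_congr_ae hs'0 ((fact a).mono fun ω h _ => h)
        have hint_mul : Integrable (fun ω => (μ[indA a|aipwComap X]) ω
            * (W ⁻¹' B).indicator (fun _ => (1:ℝ)) ω) μ := by
          have hsmc : StronglyMeasurable[aipwComap X] (μ[indA a|aipwComap X]) :=
            stronglyMeasurable_condExp
          refine (integrable_condExp (f := indA a) (m := aipwComap X)).mono
            (((hsmc.mono hm).aestronglyMeasurable).mul
              ((measurable_const.indicator htm0).aestronglyMeasurable))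
            (Filter.Eventually.of_forall fun ω => ?_)
          by_cases hω : ω ∈ W ⁻¹' B <;>
            simp [hω, abs_nonneg]
        have rhs_eq : ∫ ω in s' ∩ W ⁻¹' B, (μ[indA a|aipwComap X]) ω ∂μ
            = ∫ ω in s', (μ[indA a|aipwComap X]) ω
                * (μ[(W ⁻¹' B).indicator (fun _ => (1:ℝ))|aipwComap X]) ω ∂μ := by
          rw [← setIntegral_indicator htm0]
          have h1 : ∀ ω, (W ⁻¹' B).indicator (μ[indA a|aipwComap X]) ω
              = (μ[indA a|aipwComap X]) ω * (W ⁻¹' B).indicator (fun _ => (1:ℝ)) ω := by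
            intro ω; by_cases hω : ω ∈ W ⁻¹' B <;> simp [hω]
          simp only [h1]
          rw [← setIntegral_condExp hm hint_mul hs']
          have hsmc : StronglyMeasurable[aipwComap X] (μ[indA a|aipwComap X]) :=
            stronglyMeasurable_condExp
          have hmul := condExp_mul_of_stronglyMeasurable_left (m := aipwComap X)
            hsmc hint_mul hindT_int
          exact setIntegral_congr_ae hs'0 (hmul.mono fun ω h _ => by simpa [Pi.mul_def] using h)
        exact lhs_eq.trans rhs_eq.symm
      have hπeq : ∀ᵐ ω ∂μ, π (X ω) = S.indicator (μ[indA 1|aipwComap X]) ω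
          + Sᶜ.indicator (μ[indA (-1)|aipwComap X]) ω := by
        filter_upwards [hcorrect, hp_decomp] with ω h1 h2
        rw [h1, h2]
      have hst : MeasurableSet (s ∩ W ⁻¹' B) := hs0.inter htm0
      calc ∫ ω in s ∩ W ⁻¹' B, π (X ω) ∂μ
          = ∫ ω in s ∩ W ⁻¹' B, (S.indicator (μ[indA 1|aipwComap X]) ω
              + Sᶜ.indicator (μ[indA (-1)|aipwComap X]) ω) ∂μ :=
            setIntegral_congr_ae hst (hπeq.mono fun ω h _ => h)
        _ = ∫ ω in s ∩ W ⁻¹' B, S.indicator (μ[indA 1|aipwComap X]) ω ∂μ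
            + ∫ ω in s ∩ W ⁻¹' B, Sᶜ.indicator (μ[indA (-1)|aipwComap X]) ω ∂μ :=
            integral_add ((integrable_condExp.indicator hSm0).integrableOn)
              ((integrable_condExp.indicator hSm0.compl).integrableOn)
        _ = ∫ ω in (s ∩ W ⁻¹' B) ∩ S, (μ[indA 1|aipwComap X]) ω ∂μ
            + ∫ ω in (s ∩ W ⁻¹' B) ∩ Sᶜ, (μ[indA (-1)|aipwComap X]) ω ∂μ := by
            rw [setIntegral_indicator hSm0, setIntegral_indicator hSm0.compl]
        _ = ∫ ω in (s ∩ S) ∩ W ⁻¹' B, (μ[indA 1|aipwComap X]) ω ∂μ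
            + ∫ ω in (s ∩ Sᶜ) ∩ W ⁻¹' B, (μ[indA (-1)|aipwComap X]) ω ∂μ := by
            rw [Set.inter_right_comm s (W ⁻¹' B) S, Set.inter_right_comm s (W ⁻¹' B) Sᶜ]
        _ = ∫ ω in (s ∩ S) ∩ W ⁻¹' B, indA 1 ω ∂μ
            + ∫ ω in (s ∩ Sᶜ) ∩ W ⁻¹' B, indA (-1) ω ∂μ := by
            rw [key 1 (s ∩ S) (hs.inter hSm), key (-1) (s ∩ Sᶜ) (hs.inter hSm.compl)]
        _ = ∫ ω in (s ∩ W ⁻¹' B) ∩ S, indA 1 ω ∂μ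
            + ∫ ω in (s ∩ W ⁻¹' B) ∩ Sᶜ, indA (-1) ω ∂μ := by
            rw [Set.inter_right_comm s (W ⁻¹' B) S, Set.inter_right_comm s (W ⁻¹' B) Sᶜ]
        _ = ∫ ω in s ∩ W ⁻¹' B, S.indicator (indA 1) ω ∂μ
            + ∫ ω in s ∩ W ⁻¹' B, Sᶜ.indicator (indA (-1)) ω ∂μ := by
            rw [setIntegral_indicator hSm0, setIntegral_indicator hSm0.compl]
        _ = ∫ ω in s ∩ W ⁻¹' B, (S.indicator (indA 1) ω + Sᶜ.indicator (indA (-1)) ω) ∂μ :=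
            (integral_add (((hindA_int 1).indicator hSm0).integrableOn)
              (((hindA_int (-1)).indicator hSm0.compl).integrableOn)).symm
        _ = ∫ ω in s ∩ W ⁻¹' B, I ω ∂μ :=
            setIntegral_congr_ae hst (Filter.Eventually.of_forall fun ω _ => (E1 ω).symm)
    have hcompl : ∀ t : Set Ω, MeasurableSet[aipwComap X ⊔ aipwComap W] t →
        (∫ ω in t, π (X ω) ∂μ = ∫ ω in t, I ω ∂μ) →
        ∫ ω in tᶜ, π (X ω) ∂μ = ∫ ω in tᶜ, I ω ∂μ := by
      intro t ht hPt
      have ht0 : MeasurableSet t := h𝔪 _ ht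
      have h1 := integral_add_compl ht0 hπX_int
      have h2 := integral_add_compl ht0 hI_int
      have huniv : ∫ ω, π (X ω) ∂μ = ∫ ω, I ω ∂μ :=
        (integral_congr_ae hcorrect).trans (integral_condExp (μ := μ) (f := I) hm)
      linarith
    have hunion : ∀ f : ℕ → Set Ω, Pairwise (Function.onFun Disjoint f) →
        (∀ i, MeasurableSet[aipwComap X ⊔ aipwComap W] (f i)) →
        (∀ i, ∫ ω in f i, π (X ω) ∂μ = ∫ ω in f i, I ω ∂μ) →
        ∫ ω in ⋃ i, f i, π (X ω) ∂μ = ∫ ω in ⋃ i, f i, I ω ∂μ := by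
      intro f hdisj hfm hPf
      rw [integral_iUnion (fun i => h𝔪 _ (hfm i)) hdisj hπX_int.integrableOn,
        integral_iUnion (fun i => h𝔪 _ (hfm i)) hdisj hI_int.integrableOn]
      exact tsum_congr hPf
    exact MeasurableSpace.induction_on_inter (m := aipwComap X ⊔ aipwComap W)
      (C := fun u _ => ∫ ω in u, π (X ω) ∂μ = ∫ ω in u, I ω ∂μ)
      h_eq hPi hempty hbasic hcompl hunion s hs

    -- final computation
  have hY1m : Measurable[aipwComap X ⊔ aipwComap W] Y1 :=
    (measurable_fst.comp hWm).mono le_sup_right le_rfl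
  have hYm1m : Measurable[aipwComap X ⊔ aipwComap W] Ym1 :=
    (measurable_snd.comp hWm).mono le_sup_right le_rfl
  have hQm : Measurable[aipwComap X ⊔ aipwComap W] (fun ω => Q (X ω)) :=
    ((hQmeas.comp hXm).mono le_sup_left le_rfl)
  have hπm : Measurable[aipwComap X ⊔ aipwComap W] (fun ω => π (X ω)) :=
    hπX_meas_m.mono le_sup_left le_rfl
  have hSmsup : MeasurableSet[aipwComap X ⊔ aipwComap W] {ω | d (X ω) = 1} :=
    (le_sup_left : aipwComap X ≤ aipwComap X ⊔ aipwComap W) _ hSm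
  set h : Ω → ℝ :=
    fun ω => ((if d (X ω) = 1 then Y1 ω else Ym1 ω) - Q (X ω)) / π (X ω) with hh_def
  have hh_meas : Measurable[aipwComap X ⊔ aipwComap W] h := by
    refine Measurable.div (Measurable.sub ?_ hQm) hπm
    exact Measurable.ite hSmsup hY1m hYm1m
  have hmulrw : (fun ω => h ω * I ω) = h * I := rfl
  have heq1 : (fun ω => Y ω * (if A ω = d (X ω) then (1:ℝ) else 0) / π (X ω)
      - ((if A ω = d (X ω) then (1:ℝ) else 0) - π (X ω)) / π (X ω) * Q (X ω)) =ᵐ[μ]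
      fun ω => h ω * I ω + Q (X ω) := by
    filter_upwards [hπpos] with ω hω
    have hπne : π (X ω) ≠ 0 := ne_of_gt hω.1
    by_cases hI1 : A ω = d (X ω)
    · have hY : Y ω = (if d (X ω) = 1 then Y1 ω else Ym1 ω) := by
        rw [hcons ω]
        by_cases h1 : d (X ω) = 1
        · rw [if_pos (hI1.trans h1), if_pos h1]
        · have h2 : d (X ω) = -1 := (hdval _).resolve_left h1
          rw [if_neg (by rw [hI1, h2]; norm_num), if_neg h1]
      simp only [hh_def, hI_def, if_pos hI1, hY]
      generalize (if d (X ω) = 1 then Y1 ω else Ym1 ω) = yd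
      field_simp
      ring
    · simp only [hh_def, hI_def, if_neg hI1, mul_zero, zero_mul, zero_div, zero_sub,
        zero_add, add_zero]
      rw [neg_div, div_self hπne]
      ring
  have hhI_int : Integrable (fun ω => h ω * I ω) μ := by
    refine (hint2.sub hQint).congr ?_
    filter_upwards [heq1] with ω hω
    simp only [Pi.sub_apply]
    rw [hω]
    ring
  have hpull : μ[(fun ω => h ω * I ω)|aipwComap X ⊔ aipwComap W] =ᵐ[μ]
      fun ω => h ω * π (X ω) := by
    rw [hmulrw]
    have h1 := condExp_mul_of_stronglyMeasurable_left (m := aipwComap X ⊔ aipwComap W)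
      hh_meas.stronglyMeasurable (hmulrw ▸ hhI_int) hI_int
    refine h1.trans ?_
    filter_upwards [hC] with ω hω
    simp only [Pi.mul_apply]
    rw [← hω]
  have step2 : ∫ ω, h ω * I ω ∂μ = ∫ ω, h ω * π (X ω) ∂μ := by
    rw [← integral_condExp (μ := μ) (f := fun ω => h ω * I ω) h𝔪]
    exact integral_congr_ae hpull
  have step3 : (fun ω => h ω * π (X ω)) =ᵐ[μ]
      fun ω => (if d (X ω) = 1 then Y1 ω else Ym1 ω) - Q (X ω) := by
    filter_upwards [hπpos] with ω hω
    simp only [hh_def]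
    rw [div_mul_cancel₀ _ (ne_of_gt hω.1)]
  calc ∫ ω, (Y ω * (if A ω = d (X ω) then (1:ℝ) else 0) / π (X ω)
        - ((if A ω = d (X ω) then (1:ℝ) else 0) - π (X ω)) / π (X ω) * Q (X ω)) ∂μ
      = ∫ ω, (h ω * I ω + Q (X ω)) ∂μ := integral_congr_ae heq1
    _ = ∫ ω, h ω * I ω ∂μ + ∫ ω, Q (X ω) ∂μ := integral_add hhI_int hQint
    _ = ∫ ω, ((if d (X ω) = 1 then Y1 ω else Ym1 ω) - Q (X ω)) ∂μ + ∫ ω, Q (X ω) ∂μ := by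
        rw [step2, integral_congr_ae step3]
    _ = (∫ ω, (if d (X ω) = 1 then Y1 ω else Ym1 ω) ∂μ - ∫ ω, Q (X ω) ∂μ)
        + ∫ ω, Q (X ω) ∂μ := by rw [integral_sub hint1 hQint]
    _ = ∫ ω, (if d (X ω) = 1 then Y1 ω else Ym1 ω) ∂μ := by ring
end

section
/- If the outcome model is correctly specified, i.e., Q(X,d(X)) = E[Y | X, A=d(X)] almost surely, then for any measurable function π(d(X),X) bounded away from 0 and 1, the AIPW functional E[ Y·1{A=d(X)}/π(d(X),X) − (1{A=d(X)} − π(d(X),X))/π(d(X),X) · Q(X,d(X)) ] equals the value V(d) = E[Y(d)]. Combined with the previous statement, the AIPW functional is doubly robust. -/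
open MeasureTheory ProbabilityTheory

abbrev mcomap {Ω 𝓧 : Type*} [MeasurableSpace 𝓧] (X : Ω → 𝓧) : MeasurableSpace Ω :=
  MeasurableSpace.comap X inferInstance

lemma aux_indep_orth
    {Ω 𝓧 : Type*} [mΩ : MeasurableSpace Ω] [StandardBorelSpace Ω] [Nonempty Ω]
    [MeasurableSpace 𝓧]
    (μ : Measure Ω) [IsProbabilityMeasure μ]
    {A : Ω → ℝ} (hA : Measurable A)
    {Z : Ω → ℝ × ℝ} (hZ : Measurable Z)
    {u : Set ℝ} (hu : MeasurableSet u)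
    {g : ℝ × ℝ → ℝ} (hg : Measurable g)
    {s : Set Ω}
    (hgint : Integrable (s.indicator fun ω => g (Z ω)) μ)
    {X : Ω → 𝓧} (hX : Measurable X)
    (hindep : CondIndepFun (mcomap X) hX.comap_le A Z μ)
    (hs : MeasurableSet[mcomap X] s) :
    ∫ ω, s.indicator (fun ω' => g (Z ω')) ω *
      ((A ⁻¹' u).indicator (fun _ => (1:ℝ)) ω
        - (μ[(A ⁻¹' u).indicator (fun _ => (1:ℝ)) | mcomap X]) ω) ∂μ = 0 := by
  have hm : mcomap X ≤ mΩ := hX.comap_le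
  haveI : SigmaFinite (μ.trim hm) := by
    have : IsFiniteMeasure (μ.trim hm) := isFiniteMeasure_trim hm
    infer_instance
  have hsΩ : MeasurableSet s := hm s hs
  set p : Ω → ℝ := μ[(A ⁻¹' u).indicator (fun _ => (1:ℝ)) | mcomap X] with hp_def
  set ψ : Ω → ℝ := fun ω => (A ⁻¹' u).indicator (fun _ => (1:ℝ)) ω - p ω with hψ_def
  set Is : Ω → ℝ := s.indicator (fun _ => (1:ℝ)) with hIs_def
  have hUmeas : MeasurableSet (A ⁻¹' u) := hA hu
  have hUint : Integrable ((A ⁻¹' u).indicator (fun _ => (1:ℝ))) μ :=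
    (integrable_const (1:ℝ)).indicator hUmeas
  have hp01 : ∀ᵐ ω ∂μ, 0 ≤ p ω ∧ p ω ≤ 1 := by
    have h0 : 0 ≤ᵐ[μ] p := condExp_nonneg (Filter.Eventually.of_forall fun ω =>
      Set.indicator_nonneg (fun _ _ => zero_le_one) ω)
    have h1 : p ≤ᵐ[μ] μ[(fun _ => (1:ℝ)) | mcomap X] := condExp_mono hUint (integrable_const 1)
      (Filter.Eventually.of_forall fun ω => Set.indicator_le_self' (fun _ _ => zero_le_one) ω)
    have hc : μ[(fun _ => (1:ℝ)) | mcomap X] = fun _ => (1:ℝ) := condExp_const hm 1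
    filter_upwards [h0, h1] with ω h0 h1
    exact ⟨h0, le_trans h1 (le_of_eq (congrFun hc ω))⟩
  have hψ2 : ∀ᵐ ω ∂μ, |ψ ω| ≤ 2 := by
    filter_upwards [hp01] with ω hω
    have h1 : (0:ℝ) ≤ (A ⁻¹' u).indicator (fun _ => (1:ℝ)) ω :=
      Set.indicator_nonneg (fun _ _ => zero_le_one) ω
    have h2 : (A ⁻¹' u).indicator (fun _ => (1:ℝ)) ω ≤ 1 :=
      Set.indicator_le_self' (fun _ _ => zero_le_one) ω
    rw [abs_le]
    constructor <;> simp only [hψ_def] <;> nlinarith [hω.1, hω.2]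
  have hψsm : StronglyMeasurable ψ :=
    ((measurable_const.indicator hUmeas).stronglyMeasurable).sub
      (stronglyMeasurable_condExp.mono hm)
  have hIsmeas : Measurable Is := measurable_const.indicator hsΩ
  have hIs01 : ∀ ω, Is ω = 0 ∨ Is ω = 1 := by
    intro ω; by_cases hω : ω ∈ s
    · exact Or.inr (by simp [hIs_def, hω])
    · exact Or.inl (by simp [hIs_def, hω])
  -- star step
  have hstar : ∀ t : Set (ℝ × ℝ), MeasurableSet t →
      ∫ ω, Is ω * (Z ⁻¹' t).indicator (fun _ => (1:ℝ)) ω * ψ ω ∂μ = 0 := by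
    intro t ht
    have hZt : MeasurableSet (Z ⁻¹' t) := hZ ht
    set q : Ω → ℝ := μ[(Z ⁻¹' t).indicator (fun _ => (1:ℝ)) | mcomap X] with hq_def
    have hqint : Integrable ((Z ⁻¹' t).indicator (fun _ => (1:ℝ))) μ :=
      (integrable_const (1:ℝ)).indicator hZt
    have hci := (condIndepFun_iff_condExp_inter_preimage_eq_mul hA hZ).mp hindep u t hu ht
    have hfirst : ∫ ω, Is ω * ((A ⁻¹' u) ∩ (Z ⁻¹' t)).indicator (fun _ => (1:ℝ)) ω ∂μ
        = ∫ ω in s, p ω * q ω ∂μ := by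
      have h1 : ∫ ω, Is ω * ((A ⁻¹' u) ∩ (Z ⁻¹' t)).indicator (fun _ => (1:ℝ)) ω ∂μ
          = ∫ ω in s, ((A ⁻¹' u) ∩ (Z ⁻¹' t)).indicator (fun _ => (1:ℝ)) ω ∂μ := by
        rw [← integral_indicator hsΩ]
        refine integral_congr_ae (Filter.Eventually.of_forall fun ω => ?_)
        by_cases hω : ω ∈ s <;> simp [hIs_def, hω]
      rw [h1, ← setIntegral_condExp hm ((integrable_const (1:ℝ)).indicator (hUmeas.inter hZt)) hs]
      exact setIntegral_congr_ae hsΩ (hci.mono fun ω hω _ => hω)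
    have hsecond : ∫ ω, (Is ω * p ω) * (Z ⁻¹' t).indicator (fun _ => (1:ℝ)) ω ∂μ
        = ∫ ω in s, p ω * q ω ∂μ := by
      have hfm : StronglyMeasurable[mcomap X] (fun ω => Is ω * p ω) :=
        (stronglyMeasurable_const.indicator hs).mul stronglyMeasurable_condExp
      have hpint : Integrable p μ := integrable_condExp
      have hprod_int : Integrable (fun ω => (Is ω * p ω) * (Z ⁻¹' t).indicator (fun _ => (1:ℝ)) ω) μ := by
        refine Integrable.mono' hpint.abs ?_ ?_
        · exact (((hIsmeas.mul (stronglyMeasurable_condExp.mono hm).measurable).mul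
            (measurable_const.indicator hZt)).stronglyMeasurable).aestronglyMeasurable
        · refine Filter.Eventually.of_forall fun ω => ?_
          have h1 : |Is ω| ≤ 1 := by rcases hIs01 ω with h | h <;> simp [h]
          have h2 : |(Z ⁻¹' t).indicator (fun _ => (1:ℝ)) ω| ≤ 1 := by
            by_cases hω : ω ∈ Z ⁻¹' t <;> simp [hω]
          calc ‖Is ω * p ω * (Z ⁻¹' t).indicator (fun _ => (1:ℝ)) ω‖
              = |Is ω| * |p ω| * |(Z ⁻¹' t).indicator (fun _ => (1:ℝ)) ω| := by
                simp [abs_mul]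
            _ ≤ 1 * |p ω| * 1 := by gcongr
            _ = |p ω| := by ring
      have hpull := condExp_mul_of_stronglyMeasurable_left hfm hprod_int hqint
      calc ∫ ω, (Is ω * p ω) * (Z ⁻¹' t).indicator (fun _ => (1:ℝ)) ω ∂μ
          = ∫ ω, (μ[(fun ω' => Is ω' * p ω') * ((Z ⁻¹' t).indicator (fun _ => (1:ℝ))) | mcomap X]) ω ∂μ :=
            (integral_condExp hm).symm
        _ = ∫ ω, (Is ω * p ω) * q ω ∂μ := integral_congr_ae hpull
        _ = ∫ ω in s, p ω * q ω ∂μ := by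
            rw [← integral_indicator hsΩ]
            refine integral_congr_ae (Filter.Eventually.of_forall fun ω => ?_)
            by_cases hω : ω ∈ s <;> simp [hIs_def, hω, mul_assoc]
    have hsplit : ∀ ω, Is ω * (Z ⁻¹' t).indicator (fun _ => (1:ℝ)) ω * ψ ω
        = Is ω * ((A ⁻¹' u) ∩ (Z ⁻¹' t)).indicator (fun _ => (1:ℝ)) ω
          - (Is ω * p ω) * (Z ⁻¹' t).indicator (fun _ => (1:ℝ)) ω := by
      intro ω
      by_cases hωt : ω ∈ Z ⁻¹' t
      · by_cases hωu : ω ∈ A ⁻¹' u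
        · have h1 : ω ∈ (A ⁻¹' u) ∩ (Z ⁻¹' t) := ⟨hωu, hωt⟩
          simp only [hψ_def, Set.indicator_of_mem hωt, Set.indicator_of_mem hωu,
            Set.indicator_of_mem h1]
          ring
        · have h1 : ω ∉ (A ⁻¹' u) ∩ (Z ⁻¹' t) := fun h => hωu h.1
          simp only [hψ_def, Set.indicator_of_mem hωt, Set.indicator_of_notMem hωu,
            Set.indicator_of_notMem h1]
          ring
      · have h1 : ω ∉ (A ⁻¹' u) ∩ (Z ⁻¹' t) := fun h => hωt h.2
        simp only [Set.indicator_of_notMem hωt, Set.indicator_of_notMem h1]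
        ring
    have hint1 : Integrable (fun ω => Is ω * ((A ⁻¹' u) ∩ (Z ⁻¹' t)).indicator (fun _ => (1:ℝ)) ω) μ := by
      refine Integrable.mono' (integrable_const (1:ℝ)) ?_ ?_
      · exact ((hIsmeas.mul (measurable_const.indicator (hUmeas.inter hZt))).stronglyMeasurable).aestronglyMeasurable
      · refine Filter.Eventually.of_forall fun ω => ?_
        have h1 : |Is ω| ≤ 1 := by rcases hIs01 ω with h | h <;> simp [h]
        have h2 : |((A ⁻¹' u) ∩ (Z ⁻¹' t)).indicator (fun _ => (1:ℝ)) ω| ≤ 1 := by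
          by_cases hω : ω ∈ (A ⁻¹' u) ∩ (Z ⁻¹' t) <;> simp [hω]
        calc ‖Is ω * ((A ⁻¹' u) ∩ (Z ⁻¹' t)).indicator (fun _ => (1:ℝ)) ω‖
            = |Is ω| * |((A ⁻¹' u) ∩ (Z ⁻¹' t)).indicator (fun _ => (1:ℝ)) ω| := abs_mul _ _
          _ ≤ 1 * 1 := by gcongr
          _ = 1 := one_mul 1
    have hpint : Integrable p μ := integrable_condExp
    have hint2 : Integrable (fun ω => (Is ω * p ω) * (Z ⁻¹' t).indicator (fun _ => (1:ℝ)) ω) μ := by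
      refine Integrable.mono' hpint.abs ?_ ?_
      · exact (((hIsmeas.mul (stronglyMeasurable_condExp.mono hm).measurable).mul
          (measurable_const.indicator hZt)).stronglyMeasurable).aestronglyMeasurable
      · refine Filter.Eventually.of_forall fun ω => ?_
        have h1 : |Is ω| ≤ 1 := by rcases hIs01 ω with h | h <;> simp [h]
        have h2 : |(Z ⁻¹' t).indicator (fun _ => (1:ℝ)) ω| ≤ 1 := by
          by_cases hω : ω ∈ Z ⁻¹' t <;> simp [hω]
        calc ‖Is ω * p ω * (Z ⁻¹' t).indicator (fun _ => (1:ℝ)) ω‖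
            = |Is ω| * |p ω| * |(Z ⁻¹' t).indicator (fun _ => (1:ℝ)) ω| := by simp [abs_mul]
          _ ≤ 1 * |p ω| * 1 := by gcongr
          _ = |p ω| := by ring
    calc ∫ ω, Is ω * (Z ⁻¹' t).indicator (fun _ => (1:ℝ)) ω * ψ ω ∂μ
        = ∫ ω, (Is ω * ((A ⁻¹' u) ∩ (Z ⁻¹' t)).indicator (fun _ => (1:ℝ)) ω
            - (Is ω * p ω) * (Z ⁻¹' t).indicator (fun _ => (1:ℝ)) ω) ∂μ :=
          integral_congr_ae (Filter.Eventually.of_forall fun ω => hsplit ω)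
      _ = (∫ ω, Is ω * ((A ⁻¹' u) ∩ (Z ⁻¹' t)).indicator (fun _ => (1:ℝ)) ω ∂μ)
            - ∫ ω, (Is ω * p ω) * (Z ⁻¹' t).indicator (fun _ => (1:ℝ)) ω ∂μ :=
          integral_sub hint1 hint2
      _ = 0 := by rw [hfirst, hsecond, sub_self]
  -- integrability of simple-function stage integrands
  have hIntSimple : ∀ f : SimpleFunc (ℝ × ℝ) ℝ,
      Integrable (fun ω => Is ω * f (Z ω) * ψ ω) μ := by
    intro f
    obtain ⟨C, hC⟩ := f.exists_forall_norm_le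
    have hC0 : 0 ≤ C := le_trans (norm_nonneg _) (hC 0)
    refine Integrable.mono' (integrable_const (C * 2)) ?_ ?_
    · exact (((hIsmeas.mul (f.measurable.comp hZ)).stronglyMeasurable).mul hψsm).aestronglyMeasurable
    · filter_upwards [hψ2] with ω hψω
      have h1 : |Is ω| ≤ 1 := by rcases hIs01 ω with h | h <;> simp [h]
      calc ‖Is ω * f (Z ω) * ψ ω‖ = |Is ω| * |f (Z ω)| * |ψ ω| := by simp [abs_mul]
        _ ≤ 1 * C * 2 := by
            gcongr
            exact hC (Z ω)
        _ = C * 2 := by ring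
  -- simple-function stage
  have hsimple : ∀ f : SimpleFunc (ℝ × ℝ) ℝ,
      ∫ ω, Is ω * f (Z ω) * ψ ω ∂μ = 0 := by
    intro f
    induction f using MeasureTheory.SimpleFunc.induction with
    | const c ht =>
      rename_i t
      have heq : ∀ ω, Is ω * (SimpleFunc.piecewise t ht (SimpleFunc.const _ c)
          (SimpleFunc.const _ 0)) (Z ω) * ψ ω
          = c * (Is ω * (Z ⁻¹' t).indicator (fun _ => (1:ℝ)) ω * ψ ω) := by
        intro ω
        by_cases hω : Z ω ∈ t
        · simp [SimpleFunc.piecewise_apply, hω, Set.indicator_of_mem, Set.mem_preimage]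
          ring
        · simp [SimpleFunc.piecewise_apply, hω, Set.indicator_of_notMem, Set.mem_preimage]
      calc ∫ ω, Is ω * (SimpleFunc.piecewise t ht (SimpleFunc.const _ c)
              (SimpleFunc.const _ 0)) (Z ω) * ψ ω ∂μ
          = ∫ ω, c * (Is ω * (Z ⁻¹' t).indicator (fun _ => (1:ℝ)) ω * ψ ω) ∂μ :=
            integral_congr_ae (Filter.Eventually.of_forall heq)
        _ = c * ∫ ω, Is ω * (Z ⁻¹' t).indicator (fun _ => (1:ℝ)) ω * ψ ω ∂μ :=
            integral_const_mul _ _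
        _ = 0 := by rw [hstar t ht, mul_zero]
    | @add f1 f2 hfg hf hg2 =>
      have heq : ∀ ω, Is ω * (f1 + f2) (Z ω) * ψ ω
          = Is ω * f1 (Z ω) * ψ ω + Is ω * f2 (Z ω) * ψ ω := by
        intro ω
        simp [SimpleFunc.coe_add]
        ring
      calc ∫ ω, Is ω * (f1 + f2) (Z ω) * ψ ω ∂μ
          = ∫ ω, (Is ω * f1 (Z ω) * ψ ω + Is ω * f2 (Z ω) * ψ ω) ∂μ :=
            integral_congr_ae (Filter.Eventually.of_forall heq)
        _ = (∫ ω, Is ω * f1 (Z ω) * ψ ω ∂μ) + ∫ ω, Is ω * f2 (Z ω) * ψ ω ∂μ :=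
            integral_add (hIntSimple f1) (hIntSimple f2)
        _ = 0 := by rw [hf, hg2, add_zero]
  -- limit stage
  have hlim : ∫ ω, Is ω * g (Z ω) * ψ ω ∂μ = 0 := by
    set gn : ℕ → SimpleFunc (ℝ × ℝ) ℝ :=
      fun n => SimpleFunc.approxOn g hg Set.univ 0 (Set.mem_univ 0) n with hgn_def
    set F : ℕ → Ω → ℝ := fun n ω => Is ω * (gn n) (Z ω) * ψ ω with hF_def
    have hbound_int : Integrable (fun ω => 4 * |s.indicator (fun ω' => g (Z ω')) ω|) μ :=
      (hgint.abs.const_mul 4)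
    have hFmeas : ∀ n, AEStronglyMeasurable (F n) μ := fun n =>
      (((hIsmeas.mul ((gn n).measurable.comp hZ)).stronglyMeasurable).mul hψsm).aestronglyMeasurable
    have hFbound : ∀ n, ∀ᵐ ω ∂μ, ‖F n ω‖ ≤ 4 * |s.indicator (fun ω' => g (Z ω')) ω| := by
      intro n
      filter_upwards [hψ2] with ω hψω
      have hgn_le : ‖(gn n) (Z ω)‖ ≤ ‖g (Z ω)‖ + ‖g (Z ω)‖ :=
        SimpleFunc.norm_approxOn_zero_le hg (Set.mem_univ 0) (Z ω) n
      by_cases hω : ω ∈ s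
      · have hIs1 : Is ω = 1 := by simp [hIs_def, hω]
        have hind : s.indicator (fun ω' => g (Z ω')) ω = g (Z ω) := Set.indicator_of_mem hω _
        calc ‖F n ω‖ = |Is ω| * |(gn n) (Z ω)| * |ψ ω| := by simp [hF_def, abs_mul]
          _ ≤ 1 * (|g (Z ω)| + |g (Z ω)|) * 2 := by
              gcongr
              · simp [hIs1]
              · simpa [Real.norm_eq_abs] using hgn_le
          _ = 4 * |g (Z ω)| := by ring
          _ = 4 * |s.indicator (fun ω' => g (Z ω')) ω| := by rw [hind]
      · have hIs0 : Is ω = 0 := by simp [hIs_def, hω]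
        simp [hF_def, hIs0, Set.indicator_of_notMem hω]
    have hFtendsto : ∀ᵐ ω ∂μ, Filter.Tendsto (fun n => F n ω) Filter.atTop
        (nhds (Is ω * g (Z ω) * ψ ω)) := by
      refine Filter.Eventually.of_forall fun ω => ?_
      have h1 : Filter.Tendsto (fun n => (gn n) (Z ω)) Filter.atTop (nhds (g (Z ω))) :=
        SimpleFunc.tendsto_approxOn hg (Set.mem_univ 0) (by simp)
      exact ((h1.const_mul (Is ω)).mul_const (ψ ω))
    have := tendsto_integral_of_dominated_convergence _ hFmeas hbound_int hFbound hFtendsto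
    have h0 : (fun n => ∫ ω, F n ω ∂μ) = fun _ => (0:ℝ) := funext fun n => hsimple (gn n)
    rw [h0] at this
    exact (tendsto_nhds_unique tendsto_const_nhds this).symm
  calc ∫ ω, s.indicator (fun ω' => g (Z ω')) ω * ψ ω ∂μ
      = ∫ ω, Is ω * g (Z ω) * ψ ω ∂μ := by
        refine integral_congr_ae (Filter.Eventually.of_forall fun ω => ?_)
        by_cases hω : ω ∈ s <;>
          simp [hIs_def, Set.indicator_of_mem, Set.indicator_of_notMem, hω]
    _ = 0 := hlim

lemma measurable_comap_comp {Ω 𝓧 E : Type*} [MeasurableSpace 𝓧] [MeasurableSpace E]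
    (X : Ω → 𝓧) {φ : 𝓧 → E} (hφ : Measurable φ) :
    Measurable[mcomap X] fun ω => φ (X ω) :=
  fun t ht => ⟨φ ⁻¹' t, hφ ht, rfl⟩

/-- If the outcome model is correctly specified
(`Q(X,d(X)) = E[Y | X, A=d(X)]` a.s., characterized by
`E[Y·1{A=d(X)} | X] = Q(X)·P(A=d(X)|X)` a.s.), then for any measurable working
propensity function `π(d(X),X)` taking values in `(ε, 1-ε)`, the AIPW functional
equals the value `V(d) = E[Y(d)]`.  Together with the previous statement this is
double robustness. -/
theorem aipw_correct_outcome_model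
    {Ω 𝓧 : Type*} [MeasurableSpace Ω] [StandardBorelSpace Ω] [Nonempty Ω]
    [MeasurableSpace 𝓧]
    (μ : Measure Ω) [IsProbabilityMeasure μ]
    (X : Ω → 𝓧) (hX : Measurable X)
    (A : Ω → ℝ) (hA : Measurable A) (hAval : ∀ ω, A ω = 1 ∨ A ω = -1)
    (Y1 Ym1 Y : Ω → ℝ) (hY1 : Measurable Y1) (hYm1 : Measurable Ym1)
    -- consistency
    (hcons : ∀ ω, Y ω = (if A ω = 1 then Y1 ω else Ym1 ω))
    -- unconfoundedness
    (huncf : CondIndepFun (MeasurableSpace.comap X inferInstance) hX.comap_le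
      A (fun ω => (Y1 ω, Ym1 ω)) μ)
    -- treatment rule
    (d : 𝓧 → ℝ) (hd : Measurable d) (hdval : ∀ x, d x = 1 ∨ d x = -1)
    -- positivity of the true propensity score
    (hpos : ∀ᵐ ω ∂μ,
      0 < (μ[(fun ω' => if A ω' = d (X ω') then (1:ℝ) else 0) |
            MeasurableSpace.comap X inferInstance]) ω ∧
      (μ[(fun ω' => if A ω' = d (X ω') then (1:ℝ) else 0) |
            MeasurableSpace.comap X inferInstance]) ω < 1)
    -- arbitrary working propensity function, bounded away from 0 and 1
    (π : 𝓧 → ℝ) (hπmeas : Measurable π) (ε : ℝ) (hε : 0 < ε)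
    (hπpos : ∀ᵐ ω ∂μ, ε < π (X ω) ∧ π (X ω) < 1 - ε)
    -- correctly specified outcome model: Q(X,d(X)) = E[Y | X, A = d(X)] a.s.,
    -- characterized by E[Y·1{A=d(X)} | X] = Q(X) · E[1{A=d(X)} | X] a.s.
    (Q : 𝓧 → ℝ) (hQmeas : Measurable Q)
    (hQint : Integrable (fun ω => Q (X ω)) μ)
    (hQcorrect :
      μ[(fun ω => Y ω * (if A ω = d (X ω) then (1:ℝ) else 0)) |
          MeasurableSpace.comap X inferInstance]
        =ᵐ[μ] fun ω => Q (X ω) *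
          (μ[(fun ω' => if A ω' = d (X ω') then (1:ℝ) else 0) |
              MeasurableSpace.comap X inferInstance]) ω)
    -- integrability as needed
    (hint1 : Integrable (fun ω => if d (X ω) = 1 then Y1 ω else Ym1 ω) μ)
    (hint2 : Integrable (fun ω =>
      Y ω * (if A ω = d (X ω) then (1:ℝ) else 0) / π (X ω)
        - ((if A ω = d (X ω) then (1:ℝ) else 0) - π (X ω)) / π (X ω) * Q (X ω)) μ)
    (hint3 : Integrable (fun ω => Y ω * (if A ω = d (X ω) then (1:ℝ) else 0)) μ) :
    ∫ ω, (Y ω * (if A ω = d (X ω) then (1:ℝ) else 0) / π (X ω)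
        - ((if A ω = d (X ω) then (1:ℝ) else 0) - π (X ω)) / π (X ω) * Q (X ω)) ∂μ
      = ∫ ω, (if d (X ω) = 1 then Y1 ω else Ym1 ω) ∂μ := by
  have hm : mcomap X ≤ ‹MeasurableSpace Ω› := hX.comap_le
  haveI : SigmaFinite (μ.trim hm) := by
    have : IsFiniteMeasure (μ.trim hm) := isFiniteMeasure_trim hm
    infer_instance
  set W : Ω → ℝ := fun ω => if A ω = d (X ω) then (1:ℝ) else 0 with hW_def
  set Yd : Ω → ℝ := fun ω => if d (X ω) = 1 then Y1 ω else Ym1 ω with hYd_def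
  set e : Ω → ℝ := μ[W | mcomap X] with he_def
  have hWmeas : Measurable W :=
    Measurable.ite (measurableSet_eq_fun hA (hd.comp hX)) measurable_const measurable_const
  have hW01 : ∀ ω, W ω = 0 ∨ W ω = 1 := by
    intro ω; by_cases h : A ω = d (X ω)
    · exact Or.inr (by simp [hW_def, h])
    · exact Or.inl (by simp [hW_def, h])
  have hWint : Integrable W μ := by
    refine Integrable.mono' (integrable_const (1:ℝ)) hWmeas.aestronglyMeasurable ?_
    refine Filter.Eventually.of_forall fun ω => ?_
    rcases hW01 ω with h | h <;> simp [h]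
  have hYdmeas : Measurable Yd :=
    Measurable.ite (measurableSet_eq_fun (hd.comp hX) measurable_const) hY1 hYm1
  have he01 : ∀ᵐ ω ∂μ, 0 ≤ e ω ∧ e ω ≤ 1 := by
    have h0 : 0 ≤ᵐ[μ] e := condExp_nonneg (Filter.Eventually.of_forall fun ω => by
      rcases hW01 ω with h | h <;> simp [h])
    have h1 : e ≤ᵐ[μ] μ[(fun _ => (1:ℝ)) | mcomap X] := condExp_mono hWint (integrable_const 1)
      (Filter.Eventually.of_forall fun ω => by rcases hW01 ω with h | h <;> simp [h])
    have hc : μ[(fun _ => (1:ℝ)) | mcomap X] = fun _ => (1:ℝ) := condExp_const hm 1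
    filter_upwards [h0, h1] with ω h0 h1
    exact ⟨h0, le_trans h1 (le_of_eq (congrFun hc ω))⟩
  -- the factorization from conditional independence
  have hfact : μ[(fun ω => Yd ω * W ω) | mcomap X] =ᵐ[μ] fun ω => (μ[Yd | mcomap X]) ω * e ω := by
    set Z : Ω → ℝ × ℝ := fun ω => (Y1 ω, Ym1 ω) with hZ_def
    have hZ : Measurable Z := hY1.prodMk hYm1
    set S : Set Ω := {ω | d (X ω) = 1} with hS_def
    have hSm : MeasurableSet[mcomap X] S :=
      measurable_comap_comp X hd (measurableSet_singleton (1:ℝ))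
    have hU1 : MeasurableSet (A ⁻¹' {(1:ℝ)}) := hA (measurableSet_singleton _)
    have hUm : MeasurableSet (A ⁻¹' {(-1:ℝ)}) := hA (measurableSet_singleton _)
    have hU1int : Integrable ((A ⁻¹' {(1:ℝ)}).indicator (fun _ => (1:ℝ))) μ :=
      (integrable_const (1:ℝ)).indicator hU1
    have hUmint : Integrable ((A ⁻¹' {(-1:ℝ)}).indicator (fun _ => (1:ℝ))) μ :=
      (integrable_const (1:ℝ)).indicator hUm
    set p1 : Ω → ℝ := μ[(A ⁻¹' {(1:ℝ)}).indicator (fun _ => (1:ℝ)) | mcomap X] with hp1_def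
    set pm : Ω → ℝ := μ[(A ⁻¹' {(-1:ℝ)}).indicator (fun _ => (1:ℝ)) | mcomap X] with hpm_def
    have hp01 : ∀ U : Set Ω, MeasurableSet U →
        ∀ᵐ ω ∂μ, 0 ≤ (μ[U.indicator (fun _ => (1:ℝ)) | mcomap X]) ω ∧
          (μ[U.indicator (fun _ => (1:ℝ)) | mcomap X]) ω ≤ 1 := by
      intro U hU
      have h0 : 0 ≤ᵐ[μ] μ[U.indicator (fun _ => (1:ℝ)) | mcomap X] :=
        condExp_nonneg (Filter.Eventually.of_forall fun ω =>
          Set.indicator_nonneg (fun _ _ => zero_le_one) ω)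
      have h1 : μ[U.indicator (fun _ => (1:ℝ)) | mcomap X] ≤ᵐ[μ] μ[(fun _ => (1:ℝ)) | mcomap X] :=
        condExp_mono ((integrable_const (1:ℝ)).indicator hU) (integrable_const 1)
          (Filter.Eventually.of_forall fun ω =>
            Set.indicator_le_self' (fun _ _ => zero_le_one) ω)
      have hc : μ[(fun _ => (1:ℝ)) | mcomap X] = fun _ => (1:ℝ) := condExp_const hm 1
      filter_upwards [h0, h1] with ω h0 h1
      exact ⟨h0, le_trans h1 (le_of_eq (congrFun hc ω))⟩
    -- pointwise decomposition of W
    have hWdec : ∀ ω, W ω = S.indicator ((A ⁻¹' {(1:ℝ)}).indicator (fun _ => (1:ℝ))) ω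
        + Sᶜ.indicator ((A ⁻¹' {(-1:ℝ)}).indicator (fun _ => (1:ℝ))) ω := by
      intro ω
      simp only [hW_def, hS_def, Set.indicator_apply, Set.mem_setOf_eq, Set.mem_preimage,
        Set.mem_singleton_iff, Set.mem_compl_iff]
      rcases hdval (X ω) with h | h <;> rcases hAval ω with h2 | h2 <;>
        simp only [h, h2] <;> norm_num [Set.indicator_apply, Set.mem_preimage, Set.mem_singleton_iff, h2]
    -- a.e. decomposition of e
    have hedec : e =ᵐ[μ] fun ω => S.indicator (fun _ => (1:ℝ)) ω * p1 ω
        + Sᶜ.indicator (fun _ => (1:ℝ)) ω * pm ω := by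
      have hW2 : W = fun ω => (S.indicator ((A ⁻¹' {(1:ℝ)}).indicator (fun _ => (1:ℝ)))) ω
          + (Sᶜ.indicator ((A ⁻¹' {(-1:ℝ)}).indicator (fun _ => (1:ℝ)))) ω :=
        funext fun ω => hWdec ω
      have hadd := condExp_add (μ := μ) (m := mcomap X)
        (hU1int.indicator (hm S hSm)) (hUmint.indicator (hm Sᶜ hSm.compl))
      have hind1 := condExp_indicator (μ := μ) (m := mcomap X) hU1int hSm
      have hindm := condExp_indicator (μ := μ) (m := mcomap X) hUmint hSm.compl
      calc e = μ[W | mcomap X] := he_def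
        _ =ᵐ[μ] μ[(fun ω => (S.indicator ((A ⁻¹' {(1:ℝ)}).indicator (fun _ => (1:ℝ)))) ω
              + (Sᶜ.indicator ((A ⁻¹' {(-1:ℝ)}).indicator (fun _ => (1:ℝ)))) ω) | mcomap X] := by
            rw [← hW2]
        _ =ᵐ[μ] fun ω => S.indicator (fun _ => (1:ℝ)) ω * p1 ω
              + Sᶜ.indicator (fun _ => (1:ℝ)) ω * pm ω := by
            refine (Filter.EventuallyEq.trans (by exact hadd) ?_)
            filter_upwards [hind1, hindm] with ω h1 h2
            simp only [Pi.add_apply] at h1 h2 ⊢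
            rw [h1, h2]
            by_cases hω : ω ∈ S
            · simp [Set.indicator_of_mem hω, Set.indicator_of_notMem (by simpa using hω :
                ω ∉ Sᶜ), hp1_def]
            · simp [Set.indicator_of_notMem hω, Set.indicator_of_mem (by simpa using hω :
                ω ∈ Sᶜ), hpm_def]
    have hYdWint : Integrable (fun ω => Yd ω * W ω) μ := by
      refine Integrable.mono' hint1.abs ((hYdmeas.mul hWmeas).aestronglyMeasurable) ?_
      refine Filter.Eventually.of_forall fun ω => ?_
      rcases hW01 ω with h | h <;> simp [h, abs_nonneg]
    have hYde_int : Integrable (fun ω => Yd ω * e ω) μ := by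
      refine Integrable.mono' hint1.abs ?_ ?_
      · exact (hYdmeas.mul (stronglyMeasurable_condExp.mono hm).measurable).aestronglyMeasurable
      · filter_upwards [he01] with ω hω
        calc ‖Yd ω * e ω‖ = |Yd ω| * |e ω| := abs_mul _ _
          _ ≤ |Yd ω| * 1 := by
              gcongr
              rw [abs_le]; exact ⟨le_trans (by norm_num) hω.1, hω.2⟩
          _ = |Yd ω| := mul_one _
    have hcand_int : Integrable (fun ω => (μ[Yd | mcomap X]) ω * e ω) μ := by
      refine Integrable.mono' (integrable_condExp (m := mcomap X) (f := Yd)).abs ?_ ?_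
      · exact ((stronglyMeasurable_condExp.mono hm).measurable.mul
          (stronglyMeasurable_condExp.mono hm).measurable).aestronglyMeasurable
      · filter_upwards [he01] with ω hω
        calc ‖(μ[Yd | mcomap X]) ω * e ω‖ = |(μ[Yd | mcomap X]) ω| * |e ω| := abs_mul _ _
          _ ≤ |(μ[Yd | mcomap X]) ω| * 1 := by
              gcongr
              rw [abs_le]; exact ⟨le_trans (by norm_num) hω.1, hω.2⟩
          _ = |(μ[Yd | mcomap X]) ω| := mul_one _
    refine (ae_eq_condExp_of_forall_setIntegral_eq hm hYdWint
      (fun s hs _ => hcand_int.integrableOn)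
      (fun s hs _ => ?_)
      ((stronglyMeasurable_condExp.mul stronglyMeasurable_condExp).aestronglyMeasurable)).symm
    -- the set-integral identity
    have hsΩ : MeasurableSet s := hm s hs
    -- step (i): ∫_s E[Yd|X]·e = ∫_s Yd·e
    have hstepi : ∫ ω in s, (μ[Yd | mcomap X]) ω * e ω ∂μ = ∫ ω in s, Yd ω * e ω ∂μ := by
      set f0 : Ω → ℝ := fun ω => s.indicator (fun _ => (1:ℝ)) ω * e ω with hf0_def
      have hf0m : StronglyMeasurable[mcomap X] f0 :=
        (stronglyMeasurable_const.indicator hs).mul stronglyMeasurable_condExp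
      have hf0Yd_int : Integrable (f0 * Yd) μ := by
        refine Integrable.mono' hint1.abs ?_ ?_
        · exact ((((measurable_const.indicator hsΩ).mul
            (stronglyMeasurable_condExp.mono hm).measurable).mul hYdmeas)).aestronglyMeasurable
        · filter_upwards [he01] with ω hω
          have h1 : |s.indicator (fun _ => (1:ℝ)) ω| ≤ 1 := by
            by_cases h : ω ∈ s <;> simp [h]
          have h2 : |e ω| ≤ 1 := by
            rw [abs_le]; exact ⟨le_trans (by norm_num) hω.1, hω.2⟩
          calc ‖(f0 * Yd) ω‖
              = |s.indicator (fun _ => (1:ℝ)) ω| * |e ω| * |Yd ω| := by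
                simp [hf0_def, abs_mul]
            _ ≤ 1 * 1 * |Yd ω| := by gcongr
            _ = |Yd ω| := by ring
      have hpull2 := condExp_mul_of_stronglyMeasurable_left hf0m hf0Yd_int hint1
      calc ∫ ω in s, (μ[Yd | mcomap X]) ω * e ω ∂μ
          = ∫ ω, (f0 * μ[Yd | mcomap X]) ω ∂μ := by
            rw [← integral_indicator hsΩ]
            refine integral_congr_ae (Filter.Eventually.of_forall fun ω => ?_)
            by_cases h : ω ∈ s <;> simp [hf0_def, h] <;> ring
        _ = ∫ ω, (μ[f0 * Yd | mcomap X]) ω ∂μ := (integral_congr_ae hpull2).symm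
        _ = ∫ ω, (f0 * Yd) ω ∂μ := integral_condExp hm
        _ = ∫ ω in s, Yd ω * e ω ∂μ := by
            rw [← integral_indicator hsΩ]
            refine integral_congr_ae (Filter.Eventually.of_forall fun ω => ?_)
            by_cases h : ω ∈ s <;> simp [hf0_def, h] <;> ring
    -- step (ii): ∫_s Yd·W = ∫_s Yd·e via conditional independence
    have hgint1 : Integrable ((s ∩ S).indicator fun ω => (Z ω).1) μ := by
      refine Integrable.congr (hint1.indicator (hm _ (hs.inter hSm))) ?_
      refine Filter.Eventually.of_forall fun ω => ?_
      by_cases h : ω ∈ s ∩ S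
      · rw [Set.indicator_of_mem h, Set.indicator_of_mem h]
        have : d (X ω) = 1 := h.2
        simp [hYd_def, hZ_def, this]
      · rw [Set.indicator_of_notMem h, Set.indicator_of_notMem h]
    have hgintm : Integrable ((s ∩ Sᶜ).indicator fun ω => (Z ω).2) μ := by
      refine Integrable.congr (hint1.indicator (hm _ (hs.inter hSm.compl))) ?_
      refine Filter.Eventually.of_forall fun ω => ?_
      by_cases h : ω ∈ s ∩ Sᶜ
      · rw [Set.indicator_of_mem h, Set.indicator_of_mem h]
        have : d (X ω) ≠ 1 := h.2
        simp [hYd_def, hZ_def, this]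
      · rw [Set.indicator_of_notMem h, Set.indicator_of_notMem h]
    have hT1 := aux_indep_orth μ hA hZ (measurableSet_singleton (1:ℝ)) measurable_fst
      hgint1 hX huncf (hs.inter hSm)
    have hT2 := aux_indep_orth μ hA hZ (measurableSet_singleton (-1:ℝ)) measurable_snd
      hgintm hX huncf (hs.inter hSm.compl)
    set T1 : Ω → ℝ := fun ω => (s ∩ S).indicator (fun ω' => Prod.fst (Z ω')) ω *
      ((A ⁻¹' {(1:ℝ)}).indicator (fun _ => (1:ℝ)) ω - p1 ω) with hT1_def
    set T2 : Ω → ℝ := fun ω => (s ∩ Sᶜ).indicator (fun ω' => Prod.snd (Z ω')) ω *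
      ((A ⁻¹' {(-1:ℝ)}).indicator (fun _ => (1:ℝ)) ω - pm ω) with hT2_def
    have hT1int : Integrable T1 μ := by
      refine Integrable.mono' (hgint1.abs.const_mul 2) ?_ ?_
      · refine AEStronglyMeasurable.mul ?_ ?_
        · exact ((measurable_fst.comp hZ).indicator (hm _ (hs.inter hSm))).aestronglyMeasurable
        · exact ((measurable_const.indicator hU1).sub
            (stronglyMeasurable_condExp.mono hm).measurable).aestronglyMeasurable
      · filter_upwards [hp01 _ hU1] with ω hω
        have h2 : |(A ⁻¹' {(1:ℝ)}).indicator (fun _ => (1:ℝ)) ω - p1 ω| ≤ 2 := by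
          have ha : (0:ℝ) ≤ (A ⁻¹' {(1:ℝ)}).indicator (fun _ => (1:ℝ)) ω :=
            Set.indicator_nonneg (fun _ _ => zero_le_one) ω
          have hb : (A ⁻¹' {(1:ℝ)}).indicator (fun _ => (1:ℝ)) ω ≤ 1 :=
            Set.indicator_le_self' (fun _ _ => zero_le_one) ω
          rw [abs_le]; constructor <;> nlinarith [hω.1, hω.2]
        calc ‖T1 ω‖ = |(s ∩ S).indicator (fun ω' => Prod.fst (Z ω')) ω| *
              |(A ⁻¹' {(1:ℝ)}).indicator (fun _ => (1:ℝ)) ω - p1 ω| := by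
              simp [hT1_def, abs_mul]
          _ ≤ |(s ∩ S).indicator (fun ω' => Prod.fst (Z ω')) ω| * 2 := by gcongr
          _ = 2 * |(s ∩ S).indicator (fun ω' => (Z ω').1) ω| := by ring
    have hT2int : Integrable T2 μ := by
      refine Integrable.mono' (hgintm.abs.const_mul 2) ?_ ?_
      · refine AEStronglyMeasurable.mul ?_ ?_
        · exact ((measurable_snd.comp hZ).indicator (hm _ (hs.inter hSm.compl))).aestronglyMeasurable
        · exact ((measurable_const.indicator hUm).sub
            (stronglyMeasurable_condExp.mono hm).measurable).aestronglyMeasurable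
      · filter_upwards [hp01 _ hUm] with ω hω
        have h2 : |(A ⁻¹' {(-1:ℝ)}).indicator (fun _ => (1:ℝ)) ω - pm ω| ≤ 2 := by
          have ha : (0:ℝ) ≤ (A ⁻¹' {(-1:ℝ)}).indicator (fun _ => (1:ℝ)) ω :=
            Set.indicator_nonneg (fun _ _ => zero_le_one) ω
          have hb : (A ⁻¹' {(-1:ℝ)}).indicator (fun _ => (1:ℝ)) ω ≤ 1 :=
            Set.indicator_le_self' (fun _ _ => zero_le_one) ω
          rw [abs_le]; constructor <;> nlinarith [hω.1, hω.2]
        calc ‖T2 ω‖ = |(s ∩ Sᶜ).indicator (fun ω' => Prod.snd (Z ω')) ω| *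
              |(A ⁻¹' {(-1:ℝ)}).indicator (fun _ => (1:ℝ)) ω - pm ω| := by
              simp [hT2_def, abs_mul]
          _ ≤ |(s ∩ Sᶜ).indicator (fun ω' => Prod.snd (Z ω')) ω| * 2 := by gcongr
          _ = 2 * |(s ∩ Sᶜ).indicator (fun ω' => (Z ω').2) ω| := by ring
    have hsum : (s.indicator fun ω => Yd ω * W ω - Yd ω * e ω) =ᵐ[μ]
        fun ω => T1 ω + T2 ω := by
      filter_upwards [hedec] with ω he
      by_cases hωs : ω ∈ s
      · by_cases hωS : ω ∈ S
        · have hm1 : ω ∈ s ∩ S := ⟨hωs, hωS⟩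
          have hm2 : ω ∉ s ∩ Sᶜ := fun h => h.2 hωS
          have hYdω : Yd ω = (Z ω).1 := by
            have : d (X ω) = 1 := hωS
            simp [hYd_def, hZ_def, this]
          have hWω : W ω = (A ⁻¹' {(1:ℝ)}).indicator (fun _ => (1:ℝ)) ω := by
            rw [hWdec ω, Set.indicator_of_mem hωS,
              Set.indicator_of_notMem (by simpa using hωS : ω ∉ Sᶜ), add_zero]
          have heω : e ω = p1 ω := by
            rw [he, Set.indicator_of_mem hωS,
              Set.indicator_of_notMem (by simpa using hωS : ω ∉ Sᶜ)]
            ring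
          rw [Set.indicator_of_mem hωs]
          simp only [hT1_def, hT2_def, Set.indicator_of_mem hm1, Set.indicator_of_notMem hm2]
          rw [hYdω, hWω, heω]
          ring
        · have hm1 : ω ∉ s ∩ S := fun h => hωS h.2
          have hm2 : ω ∈ s ∩ Sᶜ := ⟨hωs, hωS⟩
          have hYdω : Yd ω = (Z ω).2 := by
            have : d (X ω) ≠ 1 := hωS
            simp [hYd_def, hZ_def, this]
          have hWω : W ω = (A ⁻¹' {(-1:ℝ)}).indicator (fun _ => (1:ℝ)) ω := by
            rw [hWdec ω, Set.indicator_of_notMem hωS,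
              Set.indicator_of_mem (by simpa using hωS : ω ∈ Sᶜ), zero_add]
          have heω : e ω = pm ω := by
            rw [he, Set.indicator_of_notMem hωS,
              Set.indicator_of_mem (by simpa using hωS : ω ∈ Sᶜ)]
            ring
          rw [Set.indicator_of_mem hωs]
          simp only [hT1_def, hT2_def, Set.indicator_of_mem hm2, Set.indicator_of_notMem hm1]
          rw [hYdω, hWω, heω]
          ring
      · have hm1 : ω ∉ s ∩ S := fun h => hωs h.1
        have hm2 : ω ∉ s ∩ Sᶜ := fun h => hωs h.1
        rw [Set.indicator_of_notMem hωs]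
        simp only [hT1_def, hT2_def, Set.indicator_of_notMem hm1, Set.indicator_of_notMem hm2]
        ring
    have hstepii : ∫ ω in s, (Yd ω * W ω - Yd ω * e ω) ∂μ = 0 := by
      rw [← integral_indicator hsΩ, integral_congr_ae hsum, integral_add hT1int hT2int,
        hT1, hT2, add_zero]
    have hsubint : ∫ ω in s, (Yd ω * W ω - Yd ω * e ω) ∂μ
        = (∫ ω in s, Yd ω * W ω ∂μ) - ∫ ω in s, Yd ω * e ω ∂μ :=
      integral_sub hYdWint.integrableOn hYde_int.integrableOn
    rw [hstepi]
    rw [hsubint] at hstepii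
    linarith [hstepii]
  -- Q(X) = E[Yd | X] a.e.
  have hQY : (fun ω => Q (X ω)) =ᵐ[μ] μ[Yd | mcomap X] := by
    have hYWeq : (fun ω => Y ω * W ω) = fun ω => Yd ω * W ω := by
      funext ω
      by_cases h : A ω = d (X ω)
      · have : Y ω = Yd ω := by
          rw [hcons ω, hYd_def]
          rcases hdval (X ω) with h1 | h1 <;> rcases hAval ω with h2 | h2 <;>
            simp [h1, h2] <;> (try rfl) <;> (exfalso; rw [h1, h2] at h; norm_num at h)
        rw [this]
      · simp [hW_def, h]
    have h1 : μ[(fun ω => Y ω * W ω) | mcomap X] =ᵐ[μ] fun ω => (μ[Yd | mcomap X]) ω * e ω := by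
      rw [hYWeq]; exact hfact
    have h2 : (fun ω => Q (X ω) * e ω) =ᵐ[μ] fun ω => (μ[Yd | mcomap X]) ω * e ω :=
      hQcorrect.symm.trans h1
    filter_upwards [h2, hpos] with ω h2 hposω
    exact mul_right_cancel₀ (ne_of_gt hposω.1) h2
  -- π is a.e. nonzero
  have hπne : ∀ᵐ ω ∂μ, π (X ω) ≠ 0 := by
    filter_upwards [hπpos] with ω hω
    exact ne_of_gt (lt_trans hε hω.1)
  -- decompose the AIPW integrand
  set G : Ω → ℝ := fun ω => (π (X ω))⁻¹ * (Y ω * W ω - Q (X ω) * W ω) with hG_def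
  have hFG : (fun ω => Y ω * W ω / π (X ω) - (W ω - π (X ω)) / π (X ω) * Q (X ω))
      =ᵐ[μ] fun ω => G ω + Q (X ω) := by
    filter_upwards [hπne] with ω hω
    simp only [hG_def]
    field_simp
    ring
  have hQWint : Integrable (fun ω => Q (X ω) * W ω) μ := by
    refine Integrable.mono' hQint.abs
      (((hQmeas.comp hX).mul hWmeas).aestronglyMeasurable) ?_
    refine Filter.Eventually.of_forall fun ω => ?_
    rcases hW01 ω with h | h <;> simp [h, abs_nonneg]
  have hGint : Integrable G μ := by
    refine Integrable.congr (hint2.sub hQint) ?_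
    filter_upwards [hFG] with ω hω
    have := hω
    simp only [Pi.sub_apply] at this ⊢
    linarith [this]
  -- ∫ G = 0
  have hGzero : ∫ ω, G ω ∂μ = 0 := by
    have hcπ : StronglyMeasurable[mcomap X] (fun ω => (π (X ω))⁻¹) :=
      (measurable_comap_comp X hπmeas.inv).stronglyMeasurable
    have hg0int : Integrable (fun ω => Y ω * W ω - Q (X ω) * W ω) μ := hint3.sub hQWint
    have hpull := condExp_mul_of_stronglyMeasurable_left (μ := μ) hcπ
      (show Integrable ((fun ω => (π (X ω))⁻¹) * fun ω => Y ω * W ω - Q (X ω) * W ω) μ from hGint)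
      hg0int
    have hQpull : μ[(fun ω => Q (X ω) * W ω) | mcomap X]
        =ᵐ[μ] fun ω => Q (X ω) * e ω := by
      have := condExp_mul_of_stronglyMeasurable_left (μ := μ)
        ((measurable_comap_comp X hQmeas).stronglyMeasurable)
        (show Integrable ((fun ω => Q (X ω)) * W) μ from hQWint) hWint
      exact this
    have hsub := condExp_sub (m := mcomap X) hint3 hQWint
    have hg0zero : μ[(fun ω => Y ω * W ω - Q (X ω) * W ω) | mcomap X] =ᵐ[μ] 0 := by
      refine (condExp_congr_ae (Filter.Eventually.of_forall fun ω => rfl)).trans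
        (hsub.trans ?_)
      filter_upwards [hQcorrect, hQpull] with ω h1 h2
      simp only [Pi.sub_apply, Pi.zero_apply]
      rw [h1, h2]
      ring
    calc ∫ ω, G ω ∂μ
        = ∫ ω, (μ[G | mcomap X]) ω ∂μ := (integral_condExp hm).symm
      _ = 0 := by
          have hzero : μ[G | mcomap X] =ᵐ[μ] 0 := by
            refine Filter.EventuallyEq.trans (by exact hpull) ?_
            filter_upwards [hg0zero] with ω h
            simp only [Pi.mul_apply, Pi.zero_apply] at h ⊢
            rw [h, mul_zero]
          rw [integral_congr_ae hzero]; simp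
  calc ∫ ω, (Y ω * W ω / π (X ω) - (W ω - π (X ω)) / π (X ω) * Q (X ω)) ∂μ
      = ∫ ω, (G ω + Q (X ω)) ∂μ := integral_congr_ae hFG
    _ = (∫ ω, G ω ∂μ) + ∫ ω, Q (X ω) ∂μ := integral_add hGint hQint
    _ = ∫ ω, Q (X ω) ∂μ := by rw [hGzero, zero_add]
    _ = ∫ ω, (μ[Yd | mcomap X]) ω ∂μ := integral_congr_ae hQY
    _ = ∫ ω, Yd ω ∂μ := integral_condExp hm
end

section
/- Let φ(β) = Y·1{A=d(X)}/π₀ − (1{A=d(X)} − π₀)/π₀ · Q(X,d(X);β) − V(d), where π₀ = P(A=d(X)|X) is the true propensity score. Then the variance E[φ(β)²] decomposes as E[φ(β)²] = E[φ*²] + E[ (1−π₀)/π₀ · (Q(X,d(X);β) − E[Y|X,A=d(X)])² ], where φ* is φ evaluated at the true conditional mean Q*(X) = E[Y|X,A=d(X)]. Consequently β minimizing E[φ(β)²] over correctly-specified model classes is attained at the true outcome regression, and for any β the variance with an incorrect Q exceeds the variance with the true Q. -/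
open MeasureTheory ProbabilityTheory

private lemma l2mul {Ω : Type*} {_ : MeasurableSpace Ω} {μ : Measure Ω} {f g : Ω → ℝ}
    (hf : MemLp f 2 μ) (hg : MemLp g 2 μ) : Integrable (fun ω => f ω * g ω) μ := by
  refine Integrable.mono' (((hf.integrable_sq.add hg.integrable_sq)).div_const 2)
    (hf.aestronglyMeasurable.mul hg.aestronglyMeasurable) ?_
  filter_upwards with ω
  simp only [Pi.add_apply, Real.norm_eq_abs, abs_mul]
  nlinarith [sq_nonneg (|f ω| - |g ω|), sq_abs (f ω), sq_abs (g ω), abs_nonneg (f ω),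
    abs_nonneg (g ω)]

private lemma aux {Ω : Type*} [inst : MeasurableSpace Ω]
    (μ : Measure Ω) [IsProbabilityMeasure μ] {m : MeasurableSpace Ω}
    (hm : m ≤ inst)
    (I πX Qs Qb Y : Ω → ℝ)
    (hImeas : Measurable[inst] I) (hIval : ∀ ω, I ω = 0 ∨ I ω = 1)
    (hπm : Measurable[m] πX) (hQsm : Measurable[m] Qs)
    (hQbm : Measurable[m] Qb)
    (hpos : ∀ᵐ ω ∂μ, 0 < πX ω ∧ πX ω < 1)
    (hEI : μ[I|m] =ᵐ[μ] πX)
    (hEYI : μ[fun ω => Y ω * I ω|m] =ᵐ[μ] fun ω => Qs ω * πX ω)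
    (hT2 : MemLp (fun ω => Y ω * I ω / πX ω - (I ω - πX ω) / πX ω * Qs ω) 2 μ)
    (hTb2 : MemLp (fun ω => Y ω * I ω / πX ω - (I ω - πX ω) / πX ω * Qb ω) 2 μ)
    (hW : Integrable (fun ω => (1 - πX ω) / πX ω * (Qb ω - Qs ω) ^ 2) μ)
    (V : ℝ) :
    ∫ ω, (Y ω * I ω / πX ω - (I ω - πX ω) / πX ω * Qb ω - V) ^ 2 ∂μ
      = (∫ ω, (Y ω * I ω / πX ω - (I ω - πX ω) / πX ω * Qs ω - V) ^ 2 ∂μ)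
        + ∫ ω, (1 - πX ω) / πX ω * (Qb ω - Qs ω) ^ 2 ∂μ := by
  haveI : SigmaFinite (μ.trim hm) := by infer_instance
  set T : Ω → ℝ := fun ω => Y ω * I ω / πX ω - (I ω - πX ω) / πX ω * Qs ω with hT_def
  set Tb : Ω → ℝ := fun ω => Y ω * I ω / πX ω - (I ω - πX ω) / πX ω * Qb ω with hTb_def
  set g : Ω → ℝ := fun ω => Tb ω - T ω with hg_def
  set c : Ω → ℝ := fun ω => (Qb ω - Qs ω) / πX ω with hc_def
  have hgc : ∀ ω, g ω = c ω * (πX ω - I ω) := fun ω => by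
    simp only [hg_def, hT_def, hTb_def, hc_def]; ring
  have hπsm : StronglyMeasurable[inst] πX := ((hπm.mono hm le_rfl)).stronglyMeasurable
  have hIabs : ∀ ω, |I ω| ≤ 1 := by
    intro ω; rcases hIval ω with h | h <;> rw [h] <;> norm_num
  have hIint : Integrable I μ := by
    refine Integrable.mono' (integrable_const 1) hImeas.aestronglyMeasurable ?_
    filter_upwards with ω using hIabs ω
  have hπabs : ∀ᵐ ω ∂μ, |πX ω| ≤ 1 := by
    filter_upwards [hpos] with ω h; rw [abs_of_pos h.1]; exact h.2.le
  have hπint : Integrable πX μ := by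
    refine Integrable.mono' (integrable_const 1) hπsm.aestronglyMeasurable ?_
    filter_upwards [hπabs] with ω h using h
  have hTint : Integrable T μ := hT2.integrable one_le_two
  have hgmem : MemLp g 2 μ := hTb2.sub hT2
  have hgint : Integrable g μ := hgmem.integrable one_le_two
  have hTIint : Integrable (fun ω => T ω * I ω) μ := by
    refine Integrable.mono' hTint.abs (hTint.1.mul hImeas.aestronglyMeasurable) ?_
    filter_upwards with ω
    rw [Real.norm_eq_abs, abs_mul]
    calc |T ω| * |I ω| ≤ |T ω| * 1 := mul_le_mul_of_nonneg_left (hIabs ω) (abs_nonneg _)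
      _ = |T ω| := mul_one _
  have hπTIint : Integrable (fun ω => πX ω * (T ω * I ω)) μ := by
    refine Integrable.mono' hTIint.abs (hπsm.aestronglyMeasurable.mul hTIint.1) ?_
    filter_upwards [hπabs] with ω h
    rw [Real.norm_eq_abs, abs_mul]
    calc |πX ω| * |T ω * I ω| ≤ 1 * |T ω * I ω| :=
          mul_le_mul_of_nonneg_right h (abs_nonneg _)
      _ = |T ω * I ω| := one_mul _
  have hπTint : Integrable (fun ω => πX ω * T ω) μ := by
    refine Integrable.mono' hTint.abs (hπsm.aestronglyMeasurable.mul hTint.1) ?_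
    filter_upwards [hπabs] with ω h
    rw [Real.norm_eq_abs, abs_mul]
    calc |πX ω| * |T ω| ≤ 1 * |T ω| := mul_le_mul_of_nonneg_right h (abs_nonneg _)
      _ = |T ω| := one_mul _
  -- Y·I is integrable
  have hYIint : Integrable (fun ω => Y ω * I ω) μ := by
    by_contra hni
    have h0 : μ[(fun ω => Y ω * I ω)|m] = 0 := condExp_of_not_integrable hni
    rw [h0] at hEYI
    have hQs0 : ∀ᵐ ω ∂μ, Qs ω = 0 := by
      filter_upwards [hEYI, hpos] with ω h1 h2
      have h3 : Qs ω * πX ω = 0 := by simpa using h1.symm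
      exact (mul_eq_zero.mp h3).resolve_right h2.1.ne'
    have hTY : (fun ω => Y ω * I ω) =ᵐ[μ] (fun ω => πX ω * T ω) := by
      filter_upwards [hQs0, hpos] with ω h1 h2
      have hne : πX ω ≠ 0 := h2.1.ne'
      simp only [hT_def, h1]
      field_simp
      ring
    exact hni (hπTint.congr hTY.symm)
  -- (1-π)·Qs·I is integrable
  have hπTIeq : (fun ω => πX ω * (T ω * I ω)) =ᵐ[μ]
      (fun ω => Y ω * I ω - (1 - πX ω) * Qs ω * I ω) := by
    filter_upwards [hpos] with ω hω
    have hne : πX ω ≠ 0 := hω.1.ne'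
    rcases hIval ω with h | h <;> simp only [hT_def] <;> rw [h] <;> field_simp <;> ring
  have hQIint : Integrable (fun ω => (1 - πX ω) * Qs ω * I ω) μ := by
    have heq : (fun ω => (1 - πX ω) * Qs ω * I ω) =ᵐ[μ]
        (fun ω => Y ω * I ω - πX ω * (T ω * I ω)) := by
      filter_upwards [hπTIeq] with ω h
      rw [show Y ω * I ω - πX ω * (T ω * I ω)
        = Y ω * I ω - (Y ω * I ω - (1 - πX ω) * Qs ω * I ω) from by rw [← h]]
      ring
    exact ((hYIint.sub hπTIint).congr heq.symm)
  -- conditional expectation computations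
  have e1 : μ[fun ω => (1 - πX ω) * Qs ω * I ω|m] =ᵐ[μ]
      fun ω => (1 - πX ω) * Qs ω * πX ω := by
    have h := condExp_mul_of_stronglyMeasurable_left
      (((measurable_const.sub hπm).mul hQsm).stronglyMeasurable)
      (show Integrable ((fun ω => (1 - πX ω) * Qs ω) * I) μ from hQIint) hIint
    refine h.trans ?_
    filter_upwards [hEI] with ω h2
    simp only [Pi.mul_apply, Pi.sub_apply, h2]
  have e2 : μ[fun ω => πX ω * (T ω * I ω)|m] =ᵐ[μ] fun ω => πX ω * (πX ω * Qs ω) := by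
    have h1 := condExp_congr_ae (m := m) hπTIeq
    have h2 := condExp_sub (m := m) hYIint hQIint
    refine h1.trans (h2.trans ?_)
    filter_upwards [hEYI, e1] with ω ha hb
    simp only [Pi.sub_apply, ha, hb]; ring
  have e2' : μ[fun ω => T ω * I ω|m] =ᵐ[μ] fun ω => πX ω * Qs ω := by
    have h := condExp_mul_of_stronglyMeasurable_left hπm.stronglyMeasurable
      (show Integrable (πX * fun ω => T ω * I ω) μ from hπTIint) hTIint
    filter_upwards [h, e2, hpos] with ω h1 h2 h3
    have h1' : (μ[fun ω => πX ω * (T ω * I ω)|m]) ω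
        = πX ω * (μ[fun ω => T ω * I ω|m]) ω := h1
    exact mul_left_cancel₀ h3.1.ne' (h1'.symm.trans h2)
  have hT1mIint : Integrable (fun ω => T ω * (1 - I ω)) μ := by
    refine Integrable.mono' hTint.abs
      (hTint.1.mul (aestronglyMeasurable_const.sub hImeas.aestronglyMeasurable)) ?_
    filter_upwards with ω
    rw [Real.norm_eq_abs, abs_mul]
    have h1 : |1 - I ω| ≤ 1 := by rcases hIval ω with h | h <;> rw [h] <;> norm_num
    calc |T ω| * |1 - I ω| ≤ |T ω| * 1 := mul_le_mul_of_nonneg_left h1 (abs_nonneg _)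
      _ = |T ω| := mul_one _
  have hTQs : (fun ω => T ω * (1 - I ω)) =ᵐ[μ] (fun ω => Qs ω * (1 - I ω)) := by
    filter_upwards [hpos] with ω hω
    have hne : πX ω ≠ 0 := hω.1.ne'
    rcases hIval ω with h | h <;> simp only [hT_def] <;> rw [h] <;> field_simp <;> ring
  have hQs1mIint : Integrable (fun ω => Qs ω * (1 - I ω)) μ := hT1mIint.congr hTQs
  have hE1mI : μ[fun ω => 1 - I ω|m] =ᵐ[μ] fun ω => 1 - πX ω := by
    have h := condExp_sub (m := m) (integrable_const (1 : ℝ)) hIint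
    refine h.trans ?_
    have h1c : μ[fun _ : Ω => (1:ℝ)|m] = fun _ => (1:ℝ) := condExp_const (μ := μ) hm 1
    filter_upwards [hEI] with ω h2
    simp only [Pi.sub_apply, h2, h1c]
  have e3 : μ[fun ω => T ω * (1 - I ω)|m] =ᵐ[μ] fun ω => Qs ω * (1 - πX ω) := by
    have h0 := condExp_congr_ae (m := m) hTQs
    have h := condExp_mul_of_stronglyMeasurable_left hQsm.stronglyMeasurable
      (show Integrable (Qs * fun ω => 1 - I ω) μ from hQs1mIint)
      ((integrable_const (1 : ℝ)).sub hIint)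
    refine h0.trans (h.trans ?_)
    filter_upwards [hE1mI] with ω h2
    simp only [Pi.mul_apply, h2]
  have e4 : μ[T|m] =ᵐ[μ] Qs := by
    have hdecomp : T = fun ω => T ω * I ω + T ω * (1 - I ω) := funext fun ω => by ring
    have h := condExp_add (m := m) hTIint hT1mIint
    rw [hdecomp]
    refine h.trans ?_
    filter_upwards [e2', e3] with ω ha hb
    simp only [Pi.add_apply, ha, hb]; ring
  have e5 : μ[fun ω => T ω * (πX ω - I ω)|m] =ᵐ[μ] fun _ => (0 : ℝ) := by
    have hdecomp : (fun ω => T ω * (πX ω - I ω))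
        = fun ω => πX ω * T ω - T ω * I ω := funext fun ω => by ring
    have h := condExp_sub (m := m) hπTint hTIint
    have hπT := condExp_mul_of_stronglyMeasurable_left hπm.stronglyMeasurable
      (show Integrable (πX * T) μ from hπTint) hTint
    rw [hdecomp]
    refine h.trans ?_
    filter_upwards [hπT, e4, e2'] with ω ha hb hc
    have ha' : (μ[fun ω => πX ω * T ω|m]) ω = πX ω * (μ[T|m]) ω := ha
    simp only [Pi.sub_apply, ha', hb, hc]; ring
  -- integral of g is 0
  have hπmIint : Integrable (fun ω => πX ω - I ω) μ := hπint.sub hIint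
  have hEπmI : μ[fun ω => πX ω - I ω|m] =ᵐ[μ] fun _ => (0 : ℝ) := by
    have h := condExp_sub (m := m) hπint hIint
    refine h.trans ?_
    have hππ : μ[πX|m] = πX :=
      condExp_of_stronglyMeasurable (μ := μ) hm hπm.stronglyMeasurable hπint
    filter_upwards [hEI] with ω h2
    simp only [Pi.sub_apply, h2, hππ]
    ring
  have hcm : StronglyMeasurable[m] c := ((hQbm.sub hQsm).div hπm).stronglyMeasurable
  have eg : μ[g|m] =ᵐ[μ] fun _ => (0 : ℝ) := by
    have hgeq : g = fun ω => c ω * (πX ω - I ω) := funext hgc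
    have h := condExp_mul_of_stronglyMeasurable_left hcm
      (show Integrable (c * fun ω => πX ω - I ω) μ by
        rw [show (c * fun ω => πX ω - I ω) = g from funext fun ω => (hgc ω).symm]
        exact hgint) hπmIint
    rw [hgeq]
    refine h.trans ?_
    filter_upwards [hEπmI] with ω h2
    simp only [Pi.mul_apply, h2, mul_zero]
  have hintg : ∫ ω, g ω ∂μ = 0 := by
    rw [← integral_condExp (μ := μ) hm (f := g), integral_congr_ae eg, integral_zero]
  -- integral of T·g is 0
  have hTgint : Integrable (fun ω => T ω * g ω) μ := l2mul hT2 hgmem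
  have hTπIint : Integrable (fun ω => T ω * (πX ω - I ω)) μ :=
    (hπTint.sub hTIint).congr (Filter.Eventually.of_forall fun ω => by
      simp only [Pi.sub_apply]; ring)
  have eTg : μ[fun ω => T ω * g ω|m] =ᵐ[μ] fun _ => (0 : ℝ) := by
    have hgeq : (fun ω => T ω * g ω) = fun ω => c ω * (T ω * (πX ω - I ω)) :=
      funext fun ω => by rw [hgc ω]; ring
    have h := condExp_mul_of_stronglyMeasurable_left hcm
      (show Integrable (c * fun ω => T ω * (πX ω - I ω)) μ by
        rw [show (c * fun ω => T ω * (πX ω - I ω)) = fun ω => T ω * g ω from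
          funext fun ω => by simp only [Pi.mul_apply]; rw [hgc ω]; ring]
        exact hTgint) hTπIint
    rw [hgeq]
    refine h.trans ?_
    filter_upwards [e5] with ω h2
    simp only [Pi.mul_apply, h2, mul_zero]
  have hintTg : ∫ ω, T ω * g ω ∂μ = 0 := by
    rw [← integral_condExp (μ := μ) hm (f := fun ω => T ω * g ω), integral_congr_ae eTg,
      integral_zero]
  -- integral of g² equals the weighted squared difference
  have hg2int : Integrable (fun ω => g ω ^ 2) μ := hgmem.integrable_sq
  have hππint : Integrable (fun ω => πX ω * πX ω) μ := by
    refine Integrable.mono' hπint.abs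
      (hπsm.aestronglyMeasurable.mul hπsm.aestronglyMeasurable) ?_
    filter_upwards [hπabs] with ω h
    rw [Real.norm_eq_abs, abs_mul]
    calc |πX ω| * |πX ω| ≤ 1 * |πX ω| := mul_le_mul_of_nonneg_right h (abs_nonneg _)
      _ = |πX ω| := one_mul _
  have h2πIint : Integrable (fun ω => (2 * πX ω - 1) * I ω) μ := by
    refine Integrable.mono' (integrable_const 1)
      (((aestronglyMeasurable_const.mul hπsm.aestronglyMeasurable).sub
        aestronglyMeasurable_const).mul hImeas.aestronglyMeasurable) ?_
    filter_upwards [hpos] with ω h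
    rw [Real.norm_eq_abs, abs_mul]
    have h1 : |2 * πX ω - 1| ≤ 1 := by
      rw [abs_le]; constructor <;> nlinarith [h.1, h.2]
    calc |2 * πX ω - 1| * |I ω| ≤ 1 * 1 :=
        mul_le_mul h1 (hIabs ω) (abs_nonneg _) zero_le_one
      _ = 1 := one_mul _
  have hdecompI2 : (fun ω => (πX ω - I ω) ^ 2)
      = fun ω => πX ω * πX ω - (2 * πX ω - 1) * I ω := by
    funext ω; rcases hIval ω with h | h <;> rw [h] <;> ring
  have hπI2int : Integrable (fun ω => (πX ω - I ω) ^ 2) μ := by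
    rw [hdecompI2]; exact hππint.sub h2πIint
  have eπI2 : μ[fun ω => (πX ω - I ω) ^ 2|m] =ᵐ[μ] fun ω => πX ω * (1 - πX ω) := by
    rw [hdecompI2]
    have h := condExp_sub (m := m) hππint h2πIint
    have hπI := condExp_mul_of_stronglyMeasurable_left
      ((measurable_const.mul hπm |>.sub measurable_const).stronglyMeasurable :
        StronglyMeasurable[m] fun ω => 2 * πX ω - 1)
      (show Integrable ((fun ω => 2 * πX ω - 1) * I) μ from h2πIint) hIint
    have hππ : μ[fun ω => πX ω * πX ω|m] = fun ω => πX ω * πX ω :=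
      condExp_of_stronglyMeasurable (μ := μ) hm ((hπm.mul hπm).stronglyMeasurable) hππint
    refine h.trans ?_
    filter_upwards [hπI, hEI] with ω ha hb
    have ha' : (μ[fun ω => (2 * πX ω - 1) * I ω|m]) ω = (2 * πX ω - 1) * (μ[I|m]) ω := ha
    simp only [Pi.sub_apply, hππ, ha', hb]
    ring
  have eg2 : μ[fun ω => g ω ^ 2|m] =ᵐ[μ]
      fun ω => (1 - πX ω) / πX ω * (Qb ω - Qs ω) ^ 2 := by
    have hgeq : (fun ω => g ω ^ 2) = fun ω => c ω * c ω * (πX ω - I ω) ^ 2 :=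
      funext fun ω => by rw [hgc ω]; ring
    have h := condExp_mul_of_stronglyMeasurable_left (hcm.mul hcm)
      (show Integrable ((fun ω => c ω * c ω) * fun ω => (πX ω - I ω) ^ 2) μ by
        rw [show ((fun ω => c ω * c ω) * fun ω => (πX ω - I ω) ^ 2)
            = fun ω => g ω ^ 2 from
          funext fun ω => by simp only [Pi.mul_apply]; rw [hgc ω]; ring]
        exact hg2int) hπI2int
    rw [hgeq]
    refine h.trans ?_
    filter_upwards [eπI2, hpos] with ω ha hb
    have hne : πX ω ≠ 0 := hb.1.ne'
    have ha' : (μ[fun ω => (πX ω - I ω) ^ 2|m]) ω = πX ω * (1 - πX ω) := ha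
    show c ω * c ω * (μ[fun ω => (πX ω - I ω) ^ 2|m]) ω
      = (1 - πX ω) / πX ω * (Qb ω - Qs ω) ^ 2
    rw [ha', hc_def]
    field_simp
  have hintg2 : ∫ ω, g ω ^ 2 ∂μ = ∫ ω, (1 - πX ω) / πX ω * (Qb ω - Qs ω) ^ 2 ∂μ := by
    rw [← integral_condExp (μ := μ) hm (f := fun ω => g ω ^ 2), integral_congr_ae eg2]
  -- assembling everything
  have hTVmem : MemLp (fun ω => T ω - V) 2 μ := hT2.sub (memLp_const V)
  have hTV2int : Integrable (fun ω => (T ω - V) ^ 2) μ := hTVmem.integrable_sq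
  have hTVgint : Integrable (fun ω => (T ω - V) * g ω) μ := l2mul hTVmem hgmem
  have hintTVg : ∫ ω, (T ω - V) * g ω ∂μ = 0 := by
    have hsplit : (fun ω => (T ω - V) * g ω) = fun ω => T ω * g ω - V * g ω :=
      funext fun ω => by ring
    rw [hsplit, integral_sub hTgint (hgint.const_mul V), hintTg, integral_const_mul, hintg]
    ring
  calc ∫ ω, (Tb ω - V) ^ 2 ∂μ
      = ∫ ω, ((T ω - V) ^ 2 + (2 * ((T ω - V) * g ω) + g ω ^ 2)) ∂μ := by
        refine integral_congr_ae (Filter.Eventually.of_forall fun ω => ?_)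
        show (Tb ω - V) ^ 2 = (T ω - V) ^ 2 + (2 * ((T ω - V) * g ω) + g ω ^ 2)
        have hTb : Tb ω = T ω + g ω := by simp only [hg_def]; ring
        rw [hTb]; ring
    _ = (∫ ω, (T ω - V) ^ 2 ∂μ) + ∫ ω, (2 * ((T ω - V) * g ω) + g ω ^ 2) ∂μ :=
        integral_add hTV2int ((hTVgint.const_mul 2).add hg2int)
    _ = (∫ ω, (T ω - V) ^ 2 ∂μ)
        + ∫ ω, (1 - πX ω) / πX ω * (Qb ω - Qs ω) ^ 2 ∂μ := by
        rw [integral_add (hTVgint.const_mul 2) hg2int, integral_const_mul, hintTVg,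
          hintg2]
        ring

/-- With the true propensity score `π₀ = P(A=d(X)|X)` and true outcome
regression `Q*(X) = E[Y|X,A=d(X)]`, the variance of the AIPW estimating function
decomposes as
`E[φ(β)²] = E[φ*²] + E[(1-π₀)/π₀ · (Q(X,d(X);β) - Q*(X))²]`,
so the variance with any working outcome model is at least the variance at the
true outcome regression. -/
theorem aipw_variance_decomposition
    {Ω 𝓧 B : Type*} [MeasurableSpace Ω] [StandardBorelSpace Ω] [Nonempty Ω]
    [MeasurableSpace 𝓧]
    (μ : Measure Ω) [IsProbabilityMeasure μ]
    (X : Ω → 𝓧) (hX : Measurable X)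
    (A : Ω → ℝ) (hA : Measurable A) (hAval : ∀ ω, A ω = 1 ∨ A ω = -1)
    (Y1 Ym1 Y : Ω → ℝ) (hY1 : Measurable Y1) (hYm1 : Measurable Ym1)
    -- consistency
    (hcons : ∀ ω, Y ω = (if A ω = 1 then Y1 ω else Ym1 ω))
    -- unconfoundedness
    (huncf : CondIndepFun (MeasurableSpace.comap X inferInstance) hX.comap_le
      A (fun ω => (Y1 ω, Ym1 ω)) μ)
    -- treatment rule
    (d : 𝓧 → ℝ) (hd : Measurable d) (hdval : ∀ x, d x = 1 ∨ d x = -1)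
    -- true propensity score π₀(X) = P(A = d(X) | X), with positivity
    (π0 : 𝓧 → ℝ) (hπ0meas : Measurable π0)
    (hπ0pos : ∀ᵐ ω ∂μ, 0 < π0 (X ω) ∧ π0 (X ω) < 1)
    (hπ0 : (fun ω => π0 (X ω)) =ᵐ[μ]
      μ[(fun ω => if A ω = d (X ω) then (1:ℝ) else 0) |
        MeasurableSpace.comap X inferInstance])
    -- true outcome regression Q*(X) = E[Y | X, A = d(X)], characterized by
    -- E[Y·1{A=d(X)} | X] = Q*(X)·π₀(X) a.s.
    (Qstar : 𝓧 → ℝ) (hQstarmeas : Measurable Qstar)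
    (hQstar :
      μ[(fun ω => Y ω * (if A ω = d (X ω) then (1:ℝ) else 0)) |
          MeasurableSpace.comap X inferInstance]
        =ᵐ[μ] fun ω => Qstar (X ω) * π0 (X ω))
    -- working outcome model Q(x, d(x); β)
    (Q : B → 𝓧 → ℝ) (hQmeas : ∀ β, Measurable (Q β))
    -- finite second moments as needed
    (hL2 : ∀ β, MemLp (fun ω =>
      Y ω * (if A ω = d (X ω) then (1:ℝ) else 0) / π0 (X ω)
        - ((if A ω = d (X ω) then (1:ℝ) else 0) - π0 (X ω)) / π0 (X ω) * Q β (X ω)) 2 μ)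
    (hL2star : MemLp (fun ω =>
      Y ω * (if A ω = d (X ω) then (1:ℝ) else 0) / π0 (X ω)
        - ((if A ω = d (X ω) then (1:ℝ) else 0) - π0 (X ω)) / π0 (X ω) * Qstar (X ω)) 2 μ)
    (hVint : Integrable (fun ω => if d (X ω) = 1 then Y1 ω else Ym1 ω) μ)
    (hWint : ∀ β, Integrable (fun ω =>
      (1 - π0 (X ω)) / π0 (X ω) * (Q β (X ω) - Qstar (X ω)) ^ 2) μ) :
    ∀ β : B,
      (∫ ω, (Y ω * (if A ω = d (X ω) then (1:ℝ) else 0) / π0 (X ω)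
          - ((if A ω = d (X ω) then (1:ℝ) else 0) - π0 (X ω)) / π0 (X ω) * Q β (X ω)
          - ∫ ω', (if d (X ω') = 1 then Y1 ω' else Ym1 ω') ∂μ) ^ 2 ∂μ
        = (∫ ω, (Y ω * (if A ω = d (X ω) then (1:ℝ) else 0) / π0 (X ω)
            - ((if A ω = d (X ω) then (1:ℝ) else 0) - π0 (X ω)) / π0 (X ω) * Qstar (X ω)
            - ∫ ω', (if d (X ω') = 1 then Y1 ω' else Ym1 ω') ∂μ) ^ 2 ∂μ)
          + ∫ ω, (1 - π0 (X ω)) / π0 (X ω) * (Q β (X ω) - Qstar (X ω)) ^ 2 ∂μ)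
      ∧
      (∫ ω, (Y ω * (if A ω = d (X ω) then (1:ℝ) else 0) / π0 (X ω)
          - ((if A ω = d (X ω) then (1:ℝ) else 0) - π0 (X ω)) / π0 (X ω) * Qstar (X ω)
          - ∫ ω', (if d (X ω') = 1 then Y1 ω' else Ym1 ω') ∂μ) ^ 2 ∂μ)
        ≤ ∫ ω, (Y ω * (if A ω = d (X ω) then (1:ℝ) else 0) / π0 (X ω)
            - ((if A ω = d (X ω) then (1:ℝ) else 0) - π0 (X ω)) / π0 (X ω) * Q β (X ω)
            - ∫ ω', (if d (X ω') = 1 then Y1 ω' else Ym1 ω') ∂μ) ^ 2 ∂μ := by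
  intro β
  have hm := hX.comap_le
  have hXm : Measurable[MeasurableSpace.comap X inferInstance] X :=
    measurable_iff_comap_le.mpr le_rfl
  have hImeas : Measurable (fun ω => if A ω = d (X ω) then (1:ℝ) else 0) :=
    Measurable.ite (measurableSet_eq_fun hA (hd.comp hX)) measurable_const measurable_const
  have hIval : ∀ ω, (if A ω = d (X ω) then (1:ℝ) else 0) = 0 ∨
      (if A ω = d (X ω) then (1:ℝ) else 0) = 1 := by
    intro ω; by_cases h : A ω = d (X ω) <;> simp [h]
  have key := aux μ hm (fun ω => if A ω = d (X ω) then (1:ℝ) else 0)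
    (fun ω => π0 (X ω)) (fun ω => Qstar (X ω)) (fun ω => Q β (X ω)) Y
    hImeas hIval (hπ0meas.comp hXm) (hQstarmeas.comp hXm) ((hQmeas β).comp hXm)
    hπ0pos hπ0.symm hQstar hL2star (hL2 β) (hWint β)
    (∫ ω', (if d (X ω') = 1 then Y1 ω' else Ym1 ω') ∂μ)
  have h0 : 0 ≤ ∫ ω, (1 - π0 (X ω)) / π0 (X ω) * (Q β (X ω) - Qstar (X ω)) ^ 2 ∂μ := by
    refine integral_nonneg_of_ae ?_
    filter_upwards [hπ0pos] with ω h
    have h1 : 0 ≤ (1 - π0 (X ω)) / π0 (X ω) := div_nonneg (by linarith [h.2]) h.1.le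
    exact mul_nonneg h1 (sq_nonneg _)
  exact ⟨key, le_of_le_of_eq (le_add_of_nonneg_right h0) key.symm⟩
end

section
/- Suppose the outcome model is correct, Q(X,d(X);β₀) = E[Y|X, A=d(X)] a.s., and π(X;α) ∈ (0,1) is any measurable working propensity model satisfying the population covariate-balancing equation E[ (1{A=d(X)}/π(X;α) − (1−1{A=d(X)})/(1−π(X;α))) · h(X;α,β₀) ] = 0 with h containing the component (1 − π(X;α))·Q(X,d(X);β₀), together with the component π_α-free balancing terms of equation (5). Then the population AIPW functional E[ Y·1{A=d(X)}/π(X;α) − (1{A=d(X)} − π(X;α))/π(X;α) · Q(X,d(X);β₀) ] equals V(d) = E[Y(d)]; i.e., balancing the correctly specified outcome regression restores consistency even when π is misspecified. -/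
open MeasureTheory ProbabilityTheory Set

lemma isCountablySpanning_Iic_rat : IsCountablySpanning (⋃ a : ℚ, {Set.Iic (a:ℝ)}) := by
  refine ⟨fun n => Set.Iic ((n:ℚ):ℝ), fun n => Set.mem_iUnion.2 ⟨n, rfl⟩, ?_⟩
  ext x
  simp only [Set.mem_iUnion, Set.mem_Iic, Set.mem_univ, iff_true]
  obtain ⟨n, hn⟩ := exists_nat_ge x
  exact ⟨n, by exact_mod_cast hn⟩

lemma borelProd_eq_generateFrom_rect :
    (inferInstance : MeasurableSpace (ℝ × ℝ)) =
      MeasurableSpace.generateFrom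
        (Set.image2 (· ×ˢ ·) (⋃ a : ℚ, {Set.Iic (a:ℝ)}) (⋃ a : ℚ, {Set.Iic (a:ℝ)})) := by
  refine (generateFrom_eq_prod ?_ ?_ isCountablySpanning_Iic_rat
      isCountablySpanning_Iic_rat).symm
  · rw [← Real.borel_eq_generateFrom_Iic_rat]; exact BorelSpace.measurable_eq.symm
  · rw [← Real.borel_eq_generateFrom_Iic_rat]; exact BorelSpace.measurable_eq.symm

/-- Inner factorization lemma for one measure. -/
lemma integral_mul_indicator_eq_of_rect
    {Ω : Type*} [MeasurableSpace Ω] (ν : Measure Ω) [IsProbabilityMeasure ν]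
    (A : Ω → ℝ) (hA : Measurable A) (V : Ω → ℝ × ℝ) (hV : Measurable V) (c : ℝ)
    (hrect : ∀ q r : ℚ, ν (A ⁻¹' {c} ∩ V ⁻¹' (Set.Iic (q:ℝ) ×ˢ Set.Iic (r:ℝ)))
      = ν (A ⁻¹' {c}) * ν (V ⁻¹' (Set.Iic (q:ℝ) ×ˢ Set.Iic (r:ℝ))))
    (W I : Ω → ℝ) (f : ℝ × ℝ → ℝ) (hf : Measurable f)
    (hWf : W =ᵐ[ν] fun ω => f (V ω))
    (hIf : I =ᵐ[ν] (A ⁻¹' {c}).indicator (fun _ => (1:ℝ)))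
    (hWint : Integrable W ν) (hWIint : Integrable (fun ω => W ω * I ω) ν) :
    ∫ ω, W ω * I ω ∂ν = (∫ ω, W ω ∂ν) * ∫ ω, I ω ∂ν := by
  classical
  set B : Set Ω := A ⁻¹' {c} with hB
  have hBmeas : MeasurableSet B := hA (measurableSet_singleton c)
  -- measure equality
  have hfin1 : IsFiniteMeasure ((ν.restrict B).map V) := by
    constructor
    rw [Measure.map_apply hV MeasurableSet.univ]
    exact lt_of_le_of_lt (measure_mono (Set.subset_univ _))
      (lt_of_le_of_lt (Measure.restrict_le_self _) (measure_lt_top ν _))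
  have hfin2 : IsFiniteMeasure ((ν B) • ν.map V) := by
    constructor
    rw [Measure.smul_apply, smul_eq_mul]
    exact ENNReal.mul_lt_top (measure_lt_top ν _)
      (by rw [Measure.map_apply hV MeasurableSet.univ]; exact measure_lt_top ν _)
  have hM : (ν.restrict B).map V = (ν B) • ν.map V := by
    refine ext_of_generate_finite _ borelProd_eq_generateFrom_rect
      ((Real.isPiSystem_Iic_rat).prod (Real.isPiSystem_Iic_rat)) ?_ ?_
    · rintro s ⟨s₁, hs₁, s₂, hs₂, rfl⟩
      obtain ⟨q, hq⟩ := Set.mem_iUnion.1 hs₁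
      obtain ⟨r, hr⟩ := Set.mem_iUnion.1 hs₂
      rw [Set.mem_singleton_iff] at hq hr
      subst hq; subst hr
      have hrectmeas : MeasurableSet (Set.Iic ((q:ℝ)) ×ˢ Set.Iic ((r:ℝ))) :=
        measurableSet_Iic.prod measurableSet_Iic
      rw [Measure.map_apply hV hrectmeas, Measure.restrict_apply (hV hrectmeas),
        Measure.smul_apply, Measure.map_apply hV hrectmeas, Set.inter_comm, smul_eq_mul]
      exact hrect q r
    · rw [Measure.map_apply hV MeasurableSet.univ, Measure.smul_apply,
        Measure.map_apply hV MeasurableSet.univ, Set.preimage_univ,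
        Measure.restrict_apply MeasurableSet.univ, Set.univ_inter, measure_univ,
        smul_eq_mul, mul_one]
  -- the integral of I
  have hIint : ∫ ω, I ω ∂ν = (ν B).toReal := by
    rw [integral_congr_ae hIf, integral_indicator_const (1:ℝ) hBmeas, smul_eq_mul, mul_one]; rfl
  -- main computation
  have h1 : ∫ ω, W ω * I ω ∂ν = ∫ ω, B.indicator (fun ω' => f (V ω')) ω ∂ν := by
    refine integral_congr_ae ?_
    filter_upwards [hWf, hIf] with ω h1 h2
    rw [h1, h2, Set.indicator_apply, Set.indicator_apply]
    by_cases h : ω ∈ B <;> simp [h]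
  rw [h1, integral_indicator hBmeas]
  have h2 : ∫ ω in B, f (V ω) ∂ν = ∫ p, f p ∂((ν.restrict B).map V) :=
    (integral_map hV.aemeasurable hf.aestronglyMeasurable).symm
  rw [h2, hM, integral_smul_measure,
    integral_map hV.aemeasurable hf.aestronglyMeasurable,
    ← integral_congr_ae hWf, hIint, smul_eq_mul, mul_comm]

/-- Key lemma: conditional independence gives a product rule for conditional expectations
of `W * I` where on an `m'`-measurable set `S`, `W` is the first component of `V` and
`I` is the indicator of `A = 1`, and off `S` the second component / `A = -1`. -/
lemma condexp_mul_indicator_factorize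
    {Ω : Type*} {m' : MeasurableSpace Ω} [mΩ : MeasurableSpace Ω] [StandardBorelSpace Ω]
    [Nonempty Ω] (hm' : m' ≤ mΩ)
    (μ : Measure Ω) [IsProbabilityMeasure μ]
    (A : Ω → ℝ) (hA : Measurable[mΩ] A)
    (V : Ω → ℝ × ℝ) (hV : Measurable[mΩ] V)
    (hindep : CondIndepFun m' hm' A V μ)
    (S : Set Ω) (hS : MeasurableSet[m'] S)
    (W I : Ω → ℝ) (hI : Measurable[mΩ] I)
    (hWS : ∀ ω ∈ S, W ω = (V ω).1) (hWSc : ∀ ω ∉ S, W ω = (V ω).2)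
    (hIS : ∀ ω ∈ S, I ω = if A ω = 1 then 1 else 0)
    (hISc : ∀ ω ∉ S, I ω = if A ω = -1 then 1 else 0)
    (hW : Integrable W μ) :
    μ[fun ω => W ω * I ω | m'] =ᵐ[μ] fun ω => (μ[W|m']) ω * (μ[I|m']) ω := by
  classical
  have hSmeas : MeasurableSet[mΩ] S := hm' S hS
  have hIbdd : ∀ ω, ‖I ω‖ ≤ 1 := by
    intro ω
    by_cases h : ω ∈ S
    · rw [hIS ω h]; split <;> simp
    · rw [hISc ω h]; split <;> simp
  have hIint : Integrable I μ :=
    Integrable.mono' (integrable_const 1) hI.aestronglyMeasurable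
      (Filter.Eventually.of_forall hIbdd)
  have hWIint : Integrable (fun ω => W ω * I ω) μ :=
    (hW.bdd_mul hI.aestronglyMeasurable (Filter.Eventually.of_forall hIbdd)).congr
      (Filter.Eventually.of_forall fun ω => mul_comm _ _)
  -- rectangle independence, a.e. in ω simultaneously for all rationals
  have hrect : ∀ c : ℝ, ∀ᵐ ω ∂μ, ∀ q r : ℚ,
      condExpKernel (mΩ := mΩ) μ m' ω (A ⁻¹' {c} ∩ V ⁻¹' (Set.Iic (q:ℝ) ×ˢ Set.Iic (r:ℝ)))
        = condExpKernel (mΩ := mΩ) μ m' ω (A ⁻¹' {c}) * condExpKernel (mΩ := mΩ) μ m' ω (V ⁻¹' (Set.Iic (q:ℝ) ×ˢ Set.Iic (r:ℝ))) := by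
    intro c
    rw [ae_all_iff]
    intro q
    rw [ae_all_iff]
    intro r
    exact ae_of_ae_trim hm'
      ((Kernel.indepFun_iff_measure_inter_preimage_eq_mul.mp hindep) _ _
        (measurableSet_singleton c) (measurableSet_Iic.prod measurableSet_Iic))
  -- the kernel gives full/zero mass to S according to membership
  have hcondS : μ[S.indicator (fun _ => (1:ℝ))|m'] = S.indicator (fun _ => (1:ℝ)) :=
    condExp_of_stronglyMeasurable hm'
      (stronglyMeasurable_const.indicator hS) ((integrable_const 1).indicator hSmeas)
  have hSker : ∀ᵐ ω ∂μ, (condExpKernel (mΩ := mΩ) μ m' ω S).toReal = S.indicator (fun _ => (1:ℝ)) ω := by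
    have := condExpKernel_ae_eq_condExp (μ := μ) hm' hSmeas
    rw [hcondS] at this
    exact this
  -- integrability under the kernel
  have hWker : ∀ᵐ ω ∂μ, Integrable W (condExpKernel (mΩ := mΩ) μ m' ω) := hW.condExpKernel_ae
  have hWIker : ∀ᵐ ω ∂μ, Integrable (fun ω' => W ω' * I ω') (condExpKernel (mΩ := mΩ) μ m' ω) := hWIint.condExpKernel_ae
  -- pointwise product formula for kernel integrals
  have hmain : ∀ᵐ ω ∂μ, ∫ ω', W ω' * I ω' ∂(condExpKernel (mΩ := mΩ) μ m' ω)
      = (∫ ω', W ω' ∂(condExpKernel (mΩ := mΩ) μ m' ω)) * ∫ ω', I ω' ∂(condExpKernel (mΩ := mΩ) μ m' ω) := by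
    filter_upwards [hrect 1, hrect (-1), hSker, hWker, hWIker] with ω h1 hm1 hs hw hwi
    by_cases hωS : ω ∈ S
    · -- condExpKernel (mΩ := mΩ) μ m' ω is concentrated on S
      have hν : condExpKernel (mΩ := mΩ) μ m' ω Sᶜ = 0 := by
        have h1' : (condExpKernel (mΩ := mΩ) μ m' ω S).toReal = 1 := by rw [hs, Set.indicator_of_mem hωS]
        have : condExpKernel (mΩ := mΩ) μ m' ω S = 1 := by
          have hfin : condExpKernel (mΩ := mΩ) μ m' ω S ≠ ⊤ := measure_ne_top _ _
          rw [← ENNReal.ofReal_toReal hfin, h1']; simp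
        rw [measure_compl hSmeas (measure_ne_top _ _), this, measure_univ, tsub_self]
      have haeS : ∀ᵐ ω' ∂(condExpKernel (mΩ := mΩ) μ m' ω), ω' ∈ S := by
        rw [MeasureTheory.ae_iff]
        exact hν
      refine integral_mul_indicator_eq_of_rect (condExpKernel (mΩ := mΩ) μ m' ω) A hA V hV 1 h1 W I Prod.fst
        measurable_fst ?_ ?_ hw hwi
      · filter_upwards [haeS] with ω' h' using hWS ω' h'
      · filter_upwards [haeS] with ω' h'
        rw [hIS ω' h', Set.indicator_apply]
        by_cases hA1 : A ω' = 1 <;> simp [hA1, Set.mem_preimage]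
    · have hν : condExpKernel (mΩ := mΩ) μ m' ω S = 0 := by
        have h0' : (condExpKernel (mΩ := mΩ) μ m' ω S).toReal = 0 := by rw [hs, Set.indicator_of_notMem hωS]
        have hfin : condExpKernel (mΩ := mΩ) μ m' ω S ≠ ⊤ := measure_ne_top _ _
        exact (ENNReal.toReal_eq_zero_iff _).mp h0' |>.resolve_right hfin
      have haeS : ∀ᵐ ω' ∂(condExpKernel (mΩ := mΩ) μ m' ω), ω' ∉ S := by
        rw [MeasureTheory.ae_iff]
        convert hν using 2
        ext ω'; simp
      refine integral_mul_indicator_eq_of_rect (condExpKernel (mΩ := mΩ) μ m' ω) A hA V hV (-1) hm1 W I Prod.snd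
        measurable_snd ?_ ?_ hw hwi
      · filter_upwards [haeS] with ω' h' using hWSc ω' h'
      · filter_upwards [haeS] with ω' h'
        rw [hISc ω' h', Set.indicator_apply]
        by_cases hA1 : A ω' = -1 <;> simp [hA1, Set.mem_preimage]
  -- convert to conditional expectations
  have e1 := condExp_ae_eq_integral_condExpKernel hm' hWIint
  have e2 := condExp_ae_eq_integral_condExpKernel hm' hW
  have e3 := condExp_ae_eq_integral_condExpKernel hm' hIint
  filter_upwards [e1, e2, e3, hmain] with ω he1 he2 he3 hm
  rw [he1, he2, he3, hm]

set_option maxHeartbeats 1000000 in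
theorem balancing_aux
    {Ω 𝓧 : Type*} {m' : MeasurableSpace Ω} [MeasurableSpace Ω] [StandardBorelSpace Ω]
    [Nonempty Ω] [MeasurableSpace 𝓧]
    (μ : Measure Ω) [IsProbabilityMeasure μ]
    (X : Ω → 𝓧) (hX : Measurable X)
    (hm' : m' ≤ ‹MeasurableSpace Ω›) (hXm' : Measurable[m'] X)
    (A : Ω → ℝ) (hA : Measurable A) (hAval : ∀ ω, A ω = 1 ∨ A ω = -1)
    (Y1 Ym1 Y : Ω → ℝ) (hY1 : Measurable Y1) (hYm1 : Measurable Ym1)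
    (hcons : ∀ ω, Y ω = (if A ω = 1 then Y1 ω else Ym1 ω))
    (huncf : CondIndepFun m' hm' A (fun ω => (Y1 ω, Ym1 ω)) μ)
    (d : 𝓧 → ℝ) (hd : Measurable d) (hdval : ∀ x, d x = 1 ∨ d x = -1)
    (π0 : 𝓧 → ℝ) (hπ0meas : Measurable π0)
    (hπ0 : (fun ω => π0 (X ω)) =ᵐ[μ]
      μ[(fun ω => if A ω = d (X ω) then (1:ℝ) else 0) | m'])
    (hπ0pos : ∀ᵐ ω ∂μ, 0 < π0 (X ω) ∧ π0 (X ω) < 1)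
    (Q : 𝓧 → ℝ) (hQmeas : Measurable Q)
    (hQint : Integrable (fun ω => Q (X ω)) μ)
    (hQcorrect :
      μ[(fun ω => Y ω * (if A ω = d (X ω) then (1:ℝ) else 0)) | m']
        =ᵐ[μ] fun ω => Q (X ω) * π0 (X ω))
    (πw : 𝓧 → ℝ) (hπwmeas : Measurable πw)
    (hπwpos : ∀ᵐ ω ∂μ, 0 < πw (X ω) ∧ πw (X ω) < 1)
    (hint1 : Integrable (fun ω => if d (X ω) = 1 then Y1 ω else Ym1 ω) μ)
    (hint2 : Integrable (fun ω =>
      Y ω * (if A ω = d (X ω) then (1:ℝ) else 0) / πw (X ω)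
        - ((if A ω = d (X ω) then (1:ℝ) else 0) - πw (X ω)) / πw (X ω) * Q (X ω)) μ)
    (hint3 : Integrable (fun ω => Y ω * (if A ω = d (X ω) then (1:ℝ) else 0)) μ) :
    ∫ ω, (Y ω * (if A ω = d (X ω) then (1:ℝ) else 0) / πw (X ω)
        - ((if A ω = d (X ω) then (1:ℝ) else 0) - πw (X ω)) / πw (X ω) * Q (X ω)) ∂μ
      = ∫ ω, (if d (X ω) = 1 then Y1 ω else Ym1 ω) ∂μ := by

  classical
  set I : Ω → ℝ := fun ω => if A ω = d (X ω) then (1:ℝ) else 0 with hIdef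
  set Yd : Ω → ℝ := fun ω => if d (X ω) = 1 then Y1 ω else Ym1 ω with hYddef
  have hImeas : Measurable I := by
    have hset : MeasurableSet {ω | A ω = d (X ω)} := by
      have hm : Measurable (fun ω => A ω - d (X ω)) := hA.sub (hd.comp hX)
      have h0 := hm (measurableSet_singleton 0)
      convert h0 using 1
      ext ω; simp [sub_eq_zero]
    exact Measurable.ite hset measurable_const measurable_const
  have hIbdd : ∀ ω, ‖I ω‖ ≤ 1 := by
    intro ω; rw [hIdef]; dsimp only; split <;> simp
  have hIint : Integrable I μ :=
    Integrable.mono' (integrable_const 1) hImeas.aestronglyMeasurable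
      (Filter.Eventually.of_forall hIbdd)
  -- Part A : ∫ Q ∘ X = ∫ Yd
  have hS : MeasurableSet[m'] (X ⁻¹' (d ⁻¹' {1})) :=
    hXm' (hd (measurableSet_singleton 1))
  have key : μ[fun ω => Yd ω * I ω|m'] =ᵐ[μ] fun ω => (μ[Yd|m']) ω * (μ[I|m']) ω := by
    refine condexp_mul_indicator_factorize hm' μ A hA (fun ω => (Y1 ω, Ym1 ω))
      (hY1.prodMk hYm1) huncf (X ⁻¹' (d ⁻¹' {1})) hS Yd I hImeas ?_ ?_ ?_ ?_ hint1
    · intro ω hω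
      have : d (X ω) = 1 := hω
      simp [hYddef, this]
    · intro ω hω
      have : ¬ d (X ω) = 1 := hω
      simp [hYddef, this]
    · intro ω hω
      have : d (X ω) = 1 := hω
      simp [hIdef, this]
    · intro ω hω
      have h1 : ¬ d (X ω) = 1 := hω
      have : d (X ω) = -1 := (hdval (X ω)).resolve_left h1
      simp [hIdef, this]
  have hYI_eq : (fun ω => Y ω * I ω) = fun ω => Yd ω * I ω := by
    funext ω
    by_cases h : A ω = d (X ω)
    · rw [hIdef, hYddef]; dsimp only; rw [if_pos h, hcons ω]
      rcases hdval (X ω) with h1 | h1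
      · rw [h1] at h; simp [h, h1]
      · rw [h1] at h
        have : ¬ A ω = 1 := by rw [h]; norm_num
        have h2 : ¬ d (X ω) = 1 := by rw [h1]; norm_num
        simp [this, h2]
    · rw [hIdef]; dsimp only; rw [if_neg h]; ring
  have hQπ : μ[fun ω => Yd ω * I ω|m'] =ᵐ[μ] fun ω => Q (X ω) * π0 (X ω) := by
    rw [← hYI_eq]; exact hQcorrect
  have hQeqYd : μ[Yd|m'] =ᵐ[μ] fun ω => Q (X ω) := by
    filter_upwards [key, hQπ, hπ0, hπ0pos] with ω hk hq hp hpos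
    have h1 : (μ[Yd|m']) ω * π0 (X ω) = Q (X ω) * π0 (X ω) := by
      rw [hp, ← hk, hq, ← hp]
    exact mul_right_cancel₀ (ne_of_gt hpos.1) h1
  have hintA : ∫ ω, Q (X ω) ∂μ = ∫ ω, Yd ω ∂μ := by
    rw [← integral_congr_ae hQeqYd, integral_condExp (μ := μ) (f := Yd) hm']
  -- Part B : the augmentation term has zero mean
  set U : Ω → ℝ := fun ω => Y ω * I ω - Q (X ω) * I ω with hUdef
  set Z : Ω → ℝ := fun ω => (πw (X ω))⁻¹ * U ω with hZdef
  have hQI : Integrable (fun ω => Q (X ω) * I ω) μ :=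
    (hQint.bdd_mul hImeas.aestronglyMeasurable (Filter.Eventually.of_forall hIbdd)).congr
      (Filter.Eventually.of_forall fun ω => mul_comm _ _)
  have hUint : Integrable U μ := hint3.sub hQI
  have hae_decomp : (fun ω => Y ω * I ω / πw (X ω)
      - (I ω - πw (X ω)) / πw (X ω) * Q (X ω)) =ᵐ[μ] fun ω => Z ω + Q (X ω) := by
    filter_upwards [hπwpos] with ω h
    rw [hZdef, hUdef]; dsimp only
    have hne : πw (X ω) ≠ 0 := ne_of_gt h.1
    field_simp
    ring
  have hZQint : Integrable (fun ω => Z ω + Q (X ω)) μ := hint2.congr hae_decomp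
  have hZint : Integrable Z μ := by
    refine (hZQint.sub hQint).congr (Filter.Eventually.of_forall fun ω => ?_)
    simp only [Pi.sub_apply]
    ring
  have hinvm' : StronglyMeasurable[m'] (fun ω => (πw (X ω))⁻¹) :=
    Measurable.stronglyMeasurable ((hπwmeas.comp hXm').inv)
  have hQXm' : StronglyMeasurable[m'] (fun ω => Q (X ω)) :=
    Measurable.stronglyMeasurable (hQmeas.comp hXm')
  have hpull : μ[Z|m'] =ᵐ[μ] fun ω => (πw (X ω))⁻¹ * (μ[U|m']) ω := by
    have h := condExp_mul_of_stronglyMeasurable_left (m := m') (μ := μ) hinvm'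
      (f := fun ω => (πw (X ω))⁻¹) (g := U) hZint hUint
    exact h
  have hcondU : μ[U|m'] =ᵐ[μ] fun ω => 0 := by
    have hsub := condExp_sub (m := m') hint3 hQI
    have hpullQ : μ[fun ω => Q (X ω) * I ω|m'] =ᵐ[μ]
        fun ω => Q (X ω) * (μ[I|m']) ω :=
      condExp_mul_of_stronglyMeasurable_left (m := m') (μ := μ) hQXm'
        (f := fun ω => Q (X ω)) (g := I) hQI hIint
    filter_upwards [hsub, hpullQ, hQcorrect, hπ0] with ω h1 h2 h3 h4
    have : (μ[U|m']) ω = (μ[fun ω => Y ω * I ω|m']) ω - (μ[fun ω => Q (X ω) * I ω|m']) ω := h1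
    rw [this, h2, h3, ← h4]
    ring
  have hZzero : ∫ ω, Z ω ∂μ = 0 := by
    rw [← integral_condExp (μ := μ) (f := Z) hm']
    have : μ[Z|m'] =ᵐ[μ] fun _ => (0:ℝ) := by
      filter_upwards [hpull, hcondU] with ω h1 h2
      rw [h1, h2, mul_zero]
    rw [integral_congr_ae this, integral_zero]
  calc ∫ ω, (Y ω * I ω / πw (X ω) - (I ω - πw (X ω)) / πw (X ω) * Q (X ω)) ∂μ
      = ∫ ω, (Z ω + Q (X ω)) ∂μ := integral_congr_ae hae_decomp
    _ = ∫ ω, Z ω ∂μ + ∫ ω, Q (X ω) ∂μ := integral_add hZint hQint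
    _ = ∫ ω, Yd ω ∂μ := by rw [hZzero, hintA, zero_add]


/-- If the outcome model is correct (`Q(X,d(X);β₀) = E[Y|X,A=d(X)]` a.s.)
and the working propensity model `π(X;α) ∈ (0,1)` satisfies the population
covariate-balancing equation with the `h`-component `(1-π(X;α))·Q(X,d(X);β₀)`, then the
population AIPW functional equals `V(d) = E[Y(d)]`: balancing the correctly specified
outcome regression restores consistency even when `π` is misspecified. -/
theorem balancing_restores_consistency
    {Ω 𝓧 : Type*} [MeasurableSpace Ω] [StandardBorelSpace Ω] [Nonempty Ω]
    [MeasurableSpace 𝓧]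
    (μ : Measure Ω) [IsProbabilityMeasure μ]
    (X : Ω → 𝓧) (hX : Measurable X)
    (A : Ω → ℝ) (hA : Measurable A) (hAval : ∀ ω, A ω = 1 ∨ A ω = -1)
    (Y1 Ym1 Y : Ω → ℝ) (hY1 : Measurable Y1) (hYm1 : Measurable Ym1)
    -- consistency
    (hcons : ∀ ω, Y ω = (if A ω = 1 then Y1 ω else Ym1 ω))
    -- unconfoundedness
    (huncf : CondIndepFun (MeasurableSpace.comap X inferInstance) hX.comap_le
      A (fun ω => (Y1 ω, Ym1 ω)) μ)
    -- treatment rule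
    (d : 𝓧 → ℝ) (hd : Measurable d) (hdval : ∀ x, d x = 1 ∨ d x = -1)
    -- true propensity score π₀(X)=P(A=d(X)|X), with positivity
    (π0 : 𝓧 → ℝ) (hπ0meas : Measurable π0)
    (hπ0 : (fun ω => π0 (X ω)) =ᵐ[μ]
      μ[(fun ω => if A ω = d (X ω) then (1:ℝ) else 0) |
        MeasurableSpace.comap X inferInstance])
    (hπ0pos : ∀ᵐ ω ∂μ, 0 < π0 (X ω) ∧ π0 (X ω) < 1)
    -- correctly specified outcome model at β₀:
    -- E[Y·1{A=d(X)} | X] = Q(X)·π₀(X) a.s.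
    (Q : 𝓧 → ℝ) (hQmeas : Measurable Q)
    (hQint : Integrable (fun ω => Q (X ω)) μ)
    (hQcorrect :
      μ[(fun ω => Y ω * (if A ω = d (X ω) then (1:ℝ) else 0)) |
          MeasurableSpace.comap X inferInstance]
        =ᵐ[μ] fun ω => Q (X ω) * π0 (X ω))
    -- working (possibly misspecified) propensity model, strictly in (0,1)
    (πw : 𝓧 → ℝ) (hπwmeas : Measurable πw)
    (hπwpos : ∀ᵐ ω ∂μ, 0 < πw (X ω) ∧ πw (X ω) < 1)
    -- population covariate-balancing equation with h-component (1-π)·Q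
    (hbal : ∫ ω, ((if A ω = d (X ω) then (1:ℝ) else 0) / πw (X ω)
        - (1 - (if A ω = d (X ω) then (1:ℝ) else 0)) / (1 - πw (X ω)))
          * ((1 - πw (X ω)) * Q (X ω)) ∂μ = 0)
    -- integrability as needed
    (hint1 : Integrable (fun ω => if d (X ω) = 1 then Y1 ω else Ym1 ω) μ)
    (hint2 : Integrable (fun ω =>
      Y ω * (if A ω = d (X ω) then (1:ℝ) else 0) / πw (X ω)
        - ((if A ω = d (X ω) then (1:ℝ) else 0) - πw (X ω)) / πw (X ω) * Q (X ω)) μ)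
    (hint3 : Integrable (fun ω => Y ω * (if A ω = d (X ω) then (1:ℝ) else 0)) μ)
    (hint4 : Integrable (fun ω => ((if A ω = d (X ω) then (1:ℝ) else 0) / πw (X ω)
        - (1 - (if A ω = d (X ω) then (1:ℝ) else 0)) / (1 - πw (X ω)))
          * ((1 - πw (X ω)) * Q (X ω))) μ) :
    ∫ ω, (Y ω * (if A ω = d (X ω) then (1:ℝ) else 0) / πw (X ω)
        - ((if A ω = d (X ω) then (1:ℝ) else 0) - πw (X ω)) / πw (X ω) * Q (X ω)) ∂μ
      = ∫ ω, (if d (X ω) = 1 then Y1 ω else Ym1 ω) ∂μ := by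
  exact balancing_aux μ X hX hX.comap_le (fun t ht => ⟨t, ht, rfl⟩) A hA hAval
    Y1 Ym1 Y hY1 hYm1 hcons huncf d hd hdval π0 hπ0meas hπ0 hπ0pos
    Q hQmeas hQint hQcorrect πw hπwmeas hπwpos hint1 hint2 hint3
end

section
/- Let Z = 1{A=d(X)} with P(Z=1|X) = π₀(X) ∈ (0,1). Then for any square-integrable g(X), Var( Z·Y/π₀(X) − (Z−π₀(X))/π₀(X)·g(X) ) is minimized over g by g*(X) = E[Y | X, Z=1], and the minimized variance equals Var(E[Y|X,Z=1]) + E[ (1/π₀(X))·Var(Y | X, Z=1) ] when the mean E[ZY/π₀] = E[g*(X)] is subtracted. -/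
open MeasureTheory ProbabilityTheory

section Helpers

variable {Ω : Type*} {mΩ : MeasurableSpace Ω} {μ : Measure Ω}

lemma aipw_l2_mul_integrable {f g : Ω → ℝ} (hf : MemLp f 2 μ) (hg : MemLp g 2 μ) :
    Integrable (fun ω => f ω * g ω) μ := by
  have h : Integrable (fun ω => (((f ω + g ω) ^ 2 - f ω ^ 2) - g ω ^ 2) / 2) μ :=
    ((((hf.add hg).integrable_sq).sub hf.integrable_sq).sub hg.integrable_sq).div_const 2
  exact h.congr (Filter.Eventually.of_forall fun ω => by ring)

lemma aipw_bdd_mul_int {f g : Ω → ℝ} (hf : AEStronglyMeasurable f μ) (hg : Integrable g μ)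
    {C : ℝ} (h : ∀ᵐ ω ∂μ, |f ω| ≤ C * |g ω|) : Integrable f μ := by
  refine Integrable.mono' (hg.abs.const_mul C) hf ?_
  filter_upwards [h] with ω hω
  simpa [Real.norm_eq_abs] using hω

lemma aipw_pullout {m : MeasurableSpace Ω} (hm : m ≤ mΩ) [IsFiniteMeasure μ]
    {φ F G : Ω → ℝ} (hφ : StronglyMeasurable[m] φ)
    (hφF : Integrable (fun ω => φ ω * F ω) μ) (hF : Integrable F μ)
    (hFG : μ[F|m] =ᵐ[μ] G) :
    ∫ ω, φ ω * F ω ∂μ = ∫ ω, φ ω * G ω ∂μ := by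
  have h1 : μ[(fun ω => φ ω * F ω)|m] =ᵐ[μ] φ * μ[F|m] :=
    condExp_mul_of_stronglyMeasurable_left hφ hφF hF
  calc ∫ ω, φ ω * F ω ∂μ = ∫ ω, (μ[(fun ω => φ ω * F ω)|m]) ω ∂μ := (integral_condExp hm).symm
    _ = ∫ ω, φ ω * G ω ∂μ := by
        refine integral_congr_ae ?_
        filter_upwards [h1, hFG] with ω e1 e2
        simp only [e1, Pi.mul_apply, e2]

lemma aipw_pullout_zero {m : MeasurableSpace Ω} (hm : m ≤ mΩ) [IsFiniteMeasure μ]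
    {φ F : Ω → ℝ} (hφ : StronglyMeasurable[m] φ)
    (hφF : Integrable (fun ω => φ ω * F ω) μ) (hF : Integrable F μ)
    (hFG : μ[F|m] =ᵐ[μ] fun _ => (0:ℝ)) :
    ∫ ω, φ ω * F ω ∂μ = 0 := by
  rw [aipw_pullout hm hφ hφF hF hFG]
  simp

end Helpers

/-- With `Z = 1{A=d(X)}`, `π₀(X) = P(Z=1|X)` and mean subtracted at
`E[ZY/π₀] = E[g*(X)]`, the variance of the AIPW function
`ZY/π₀(X) - (Z-π₀(X))/π₀(X)·g(X)` over square-integrable `g` is minimized at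
`g*(X) = E[Y|X,Z=1]`, and the minimized variance equals
`Var(E[Y|X,Z=1]) + E[(1/π₀(X))·Var(Y|X,Z=1)]`. -/
theorem aipw_variance_minimizer
    {Ω 𝓧 : Type*} [MeasurableSpace Ω] [StandardBorelSpace Ω] [Nonempty Ω]
    [MeasurableSpace 𝓧]
    (μ : Measure Ω) [IsProbabilityMeasure μ]
    (X : Ω → 𝓧) (hX : Measurable X)
    (Z : Ω → ℝ) (hZ : Measurable Z) (hZval : ∀ ω, Z ω = 0 ∨ Z ω = 1)
    (Y : Ω → ℝ) (hY : Measurable Y) (hYL2 : MemLp Y 2 μ)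
    -- π₀(X) = P(Z=1|X), bounded in (ε,1-ε)
    (π0 : 𝓧 → ℝ) (hπ0meas : Measurable π0)
    (hπ0 : (fun ω => π0 (X ω)) =ᵐ[μ] μ[Z | MeasurableSpace.comap X inferInstance])
    (ε : ℝ) (hε : 0 < ε)
    (hπ0pos : ∀ᵐ ω ∂μ, ε < π0 (X ω) ∧ π0 (X ω) < 1 - ε)
    -- g*(X) = E[Y | X, Z=1]: characterized by E[ZY|X] = g*(X)·π₀(X) a.s.
    (gstar : 𝓧 → ℝ) (hgstarmeas : Measurable gstar)
    (hgstarL2 : MemLp (fun ω => gstar (X ω)) 2 μ)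
    (hgstar : μ[(fun ω => Z ω * Y ω) | MeasurableSpace.comap X inferInstance]
      =ᵐ[μ] fun ω => gstar (X ω) * π0 (X ω))
    -- v(X) = Var(Y | X, Z=1): characterized by E[ZY²|X] = (v(X)+g*(X)²)·π₀(X) a.s.
    (v : 𝓧 → ℝ) (hvmeas : Measurable v)
    (hvint : Integrable (fun ω => v (X ω) / π0 (X ω)) μ)
    (hv : μ[(fun ω => Z ω * Y ω ^ 2) | MeasurableSpace.comap X inferInstance]
      =ᵐ[μ] fun ω => (v (X ω) + gstar (X ω) ^ 2) * π0 (X ω)) :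
    -- minimization over square-integrable augmentations g
    (∀ g : 𝓧 → ℝ, Measurable g → MemLp (fun ω => g (X ω)) 2 μ →
      ∫ ω, (Z ω * Y ω / π0 (X ω) - (Z ω - π0 (X ω)) / π0 (X ω) * gstar (X ω)
          - ∫ ω', gstar (X ω') ∂μ) ^ 2 ∂μ
        ≤ ∫ ω, (Z ω * Y ω / π0 (X ω) - (Z ω - π0 (X ω)) / π0 (X ω) * g (X ω)
          - ∫ ω', gstar (X ω') ∂μ) ^ 2 ∂μ)
    -- the minimized variance
    ∧ ∫ ω, (Z ω * Y ω / π0 (X ω) - (Z ω - π0 (X ω)) / π0 (X ω) * gstar (X ω)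
          - ∫ ω', gstar (X ω') ∂μ) ^ 2 ∂μ
      = (∫ ω, (gstar (X ω) - ∫ ω', gstar (X ω') ∂μ) ^ 2 ∂μ)
        + ∫ ω, v (X ω) / π0 (X ω) ∂μ := by
  have hm : MeasurableSpace.comap X inferInstance ≤ ‹MeasurableSpace Ω› := hX.comap_le
  haveI : SigmaFinite (μ.trim hm) := inferInstance
  -- pointwise facts about Z
  have hZsq : ∀ ω, Z ω * Z ω = Z ω := fun ω => by rcases hZval ω with h | h <;> rw [h] <;> ring
  have hZabs : ∀ ω, |Z ω| ≤ 1 := fun ω => by rcases hZval ω with h | h <;> rw [h] <;> norm_num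
  have hpae : ∀ᵐ ω ∂μ, ε < π0 (X ω) ∧ π0 (X ω) < 1 :=
    hπ0pos.mono fun ω h => ⟨h.1, by linarith [h.2]⟩
  -- measurability
  have hXm : Measurable[MeasurableSpace.comap X inferInstance] X := Measurable.of_comap_le le_rfl
  have hGmeas : Measurable fun ω => gstar (X ω) := hgstarmeas.comp hX
  have hpmeas : Measurable fun ω => π0 (X ω) := hπ0meas.comp hX
  have hGm : StronglyMeasurable[MeasurableSpace.comap X inferInstance] fun ω => gstar (X ω) :=
    (hgstarmeas.comp hXm).stronglyMeasurable
  have hpm : StronglyMeasurable[MeasurableSpace.comap X inferInstance] fun ω => π0 (X ω) :=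
    (hπ0meas.comp hXm).stronglyMeasurable
  -- integrability basics
  have hYint : Integrable Y μ := hYL2.integrable one_le_two
  have hGint : Integrable (fun ω => gstar (X ω)) μ := hgstarL2.integrable one_le_two
  have hZint : Integrable Z μ := by
    refine Integrable.mono' (integrable_const 1) hZ.aestronglyMeasurable ?_
    exact Filter.Eventually.of_forall fun ω => by simpa [Real.norm_eq_abs] using hZabs ω
  have hpint : Integrable (fun ω => π0 (X ω)) μ := by
    refine Integrable.mono' (integrable_const 1) hpmeas.aestronglyMeasurable ?_
    filter_upwards [hpae] with ω h
    rw [Real.norm_eq_abs, abs_of_pos (hε.trans h.1)]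
    linarith [h.2]
  have hZYint : Integrable (fun ω => Z ω * Y ω) μ := by
    refine aipw_bdd_mul_int (C := 1) (hZ.mul hY).aestronglyMeasurable hYint ?_
    refine Filter.Eventually.of_forall fun ω => ?_
    rw [abs_mul, one_mul]
    exact mul_le_of_le_one_left (abs_nonneg _) (hZabs ω)
  have hGZint : Integrable (fun ω => gstar (X ω) * Z ω) μ := by
    refine aipw_bdd_mul_int (C := 1) (hGmeas.mul hZ).aestronglyMeasurable hGint ?_
    refine Filter.Eventually.of_forall fun ω => ?_
    rw [abs_mul, one_mul]
    exact mul_le_of_le_one_right (abs_nonneg _) (hZabs ω)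
  have hY2int : Integrable (fun ω => Y ω ^ 2) μ := hYL2.integrable_sq
  have hZY2int : Integrable (fun ω => Z ω * Y ω ^ 2) μ := by
    refine aipw_bdd_mul_int (C := 1) (hZ.mul (hY.pow_const 2)).aestronglyMeasurable hY2int ?_
    refine Filter.Eventually.of_forall fun ω => ?_
    rw [abs_mul, one_mul]
    exact mul_le_of_le_one_left (abs_nonneg _) (hZabs ω)
  have hGZYint : Integrable (fun ω => (2 * gstar (X ω)) * (Z ω * Y ω)) μ := by
    have hGY : Integrable (fun ω => gstar (X ω) * Y ω) μ := aipw_l2_mul_integrable hgstarL2 hYL2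
    refine aipw_bdd_mul_int (C := 2) ((hGmeas.const_mul 2).mul (hZ.mul hY)).aestronglyMeasurable hGY ?_
    refine Filter.Eventually.of_forall fun ω => ?_
    have h1 : |(2 * gstar (X ω)) * (Z ω * Y ω)| = 2 * |gstar (X ω)| * (|Z ω| * |Y ω|) := by
      rw [abs_mul, abs_mul, abs_mul]; norm_num
    rw [h1, abs_mul]
    nlinarith [abs_nonneg (gstar (X ω)), abs_nonneg (Y ω), abs_nonneg (Z ω), hZabs ω,
      mul_nonneg (abs_nonneg (gstar (X ω))) (abs_nonneg (Y ω))]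
  have hG2int : Integrable (fun ω => gstar (X ω) ^ 2) μ := hgstarL2.integrable_sq
  have hG2Zint : Integrable (fun ω => gstar (X ω) ^ 2 * Z ω) μ := by
    refine aipw_bdd_mul_int (C := 1) ((hGmeas.pow_const 2).mul hZ).aestronglyMeasurable hG2int ?_
    refine Filter.Eventually.of_forall fun ω => ?_
    rw [abs_mul, one_mul]
    exact mul_le_of_le_one_right (abs_nonneg _) (hZabs ω)
  -- conditional expectation facts
  have hZcond : μ[Z|MeasurableSpace.comap X inferInstance] =ᵐ[μ] fun ω => π0 (X ω) := hπ0.symm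
  have hZmp : μ[(fun ω => Z ω - π0 (X ω))|MeasurableSpace.comap X inferInstance]
      =ᵐ[μ] fun _ => (0:ℝ) := by
    have h1 : μ[(fun ω => Z ω - π0 (X ω))|MeasurableSpace.comap X inferInstance]
        =ᵐ[μ] μ[Z|MeasurableSpace.comap X inferInstance]
          - μ[(fun ω => π0 (X ω))|MeasurableSpace.comap X inferInstance] :=
      condExp_sub hZint hpint _
    have h2 : μ[(fun ω => π0 (X ω))|MeasurableSpace.comap X inferInstance]
        = fun ω => π0 (X ω) :=
      condExp_of_stronglyMeasurable hm hpm hpint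
    filter_upwards [h1, hZcond] with ω e1 e2
    rw [e1]
    simp [h2, e2]
  have hYGcond : μ[(fun ω => Z ω * (Y ω - gstar (X ω)))|MeasurableSpace.comap X inferInstance]
      =ᵐ[μ] fun _ => (0:ℝ) := by
    have h3 : (fun ω => Z ω * (Y ω - gstar (X ω)))
        = fun ω => Z ω * Y ω - gstar (X ω) * Z ω := by
      funext ω; ring
    have h1 : μ[(fun ω => Z ω * Y ω - gstar (X ω) * Z ω)|MeasurableSpace.comap X inferInstance]
        =ᵐ[μ] μ[(fun ω => Z ω * Y ω)|MeasurableSpace.comap X inferInstance]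
          - μ[(fun ω => gstar (X ω) * Z ω)|MeasurableSpace.comap X inferInstance] :=
      condExp_sub hZYint hGZint _
    have h2 : μ[(fun ω => gstar (X ω) * Z ω)|MeasurableSpace.comap X inferInstance]
        =ᵐ[μ] fun ω => gstar (X ω) * (μ[Z|MeasurableSpace.comap X inferInstance]) ω :=
      condExp_mul_of_stronglyMeasurable_left hGm hGZint hZint
    rw [h3]
    filter_upwards [h1, h2, hgstar, hZcond] with ω e1 e2 e3 e4
    rw [e1]
    simp only [Pi.sub_apply]
    rw [e3, e2, e4]
    ring
  have hYG2cond : μ[(fun ω => Z ω * (Y ω - gstar (X ω)) ^ 2)|MeasurableSpace.comap X inferInstance]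
      =ᵐ[μ] fun ω => v (X ω) * π0 (X ω) := by
    have h3 : (fun ω => Z ω * (Y ω - gstar (X ω)) ^ 2)
        = fun ω => (Z ω * Y ω ^ 2 - (2 * gstar (X ω)) * (Z ω * Y ω)) + gstar (X ω) ^ 2 * Z ω := by
      funext ω
      ring
    have h1 : μ[(fun ω => (Z ω * Y ω ^ 2 - (2 * gstar (X ω)) * (Z ω * Y ω))
            + gstar (X ω) ^ 2 * Z ω)|MeasurableSpace.comap X inferInstance]
        =ᵐ[μ] μ[(fun ω => Z ω * Y ω ^ 2 - (2 * gstar (X ω)) * (Z ω * Y ω))|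
            MeasurableSpace.comap X inferInstance]
          + μ[(fun ω => gstar (X ω) ^ 2 * Z ω)|MeasurableSpace.comap X inferInstance] :=
      condExp_add (hZY2int.sub hGZYint) hG2Zint _
    have h1' : μ[(fun ω => Z ω * Y ω ^ 2 - (2 * gstar (X ω)) * (Z ω * Y ω))|
            MeasurableSpace.comap X inferInstance]
        =ᵐ[μ] μ[(fun ω => Z ω * Y ω ^ 2)|MeasurableSpace.comap X inferInstance]
          - μ[(fun ω => (2 * gstar (X ω)) * (Z ω * Y ω))|MeasurableSpace.comap X inferInstance] :=
      condExp_sub hZY2int hGZYint _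
    have h2G : StronglyMeasurable[MeasurableSpace.comap X inferInstance]
        fun ω => 2 * gstar (X ω) := hGm.const_mul 2
    have h2 : μ[(fun ω => (2 * gstar (X ω)) * (Z ω * Y ω))|MeasurableSpace.comap X inferInstance]
        =ᵐ[μ] fun ω => (2 * gstar (X ω))
          * (μ[(fun ω => Z ω * Y ω)|MeasurableSpace.comap X inferInstance]) ω :=
      condExp_mul_of_stronglyMeasurable_left h2G hGZYint hZYint
    have h4 : μ[(fun ω => gstar (X ω) ^ 2 * Z ω)|MeasurableSpace.comap X inferInstance]
        =ᵐ[μ] fun ω => gstar (X ω) ^ 2 * (μ[Z|MeasurableSpace.comap X inferInstance]) ω :=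
      condExp_mul_of_stronglyMeasurable_left (hGm.pow 2) hG2Zint hZint
    rw [h3]
    filter_upwards [h1, h1', h2, h4, hgstar, hv, hZcond] with ω e1 e1' e2 e4 e3 ev eZ
    rw [e1]
    simp only [Pi.add_apply, Pi.sub_apply]
    rw [e1', Pi.sub_apply, e2, e4, e3, ev, eZ]
    ring

  -- abbreviations
  set c : ℝ := ∫ ω', gstar (X ω') ∂μ with hc
  set A : Ω → ℝ := fun ω => (gstar (X ω) - c) + Z ω * (Y ω - gstar (X ω)) / π0 (X ω) with hA
  -- bound helpers
  have key_bd : ∀ (a b pp : ℝ), ε < pp → |a| ≤ 1 → |a * b / pp| ≤ 1/ε * |b| := by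
    intro a b pp hp ha
    have hp0 : 0 < pp := hε.trans hp
    rw [abs_div, abs_mul, abs_of_pos hp0, div_le_iff₀ hp0]
    calc |a| * |b| ≤ |b| := mul_le_of_le_one_left (abs_nonneg b) ha
      _ = 1/ε * |b| * ε := by field_simp [hε.ne']
      _ ≤ 1/ε * |b| * pp := mul_le_mul_of_nonneg_left hp.le (by positivity)
  have key_bd2 : ∀ (a b pp : ℝ), ε < pp → |a| ≤ 1 → |a * b / pp^2| ≤ 1/ε^2 * |b| := by
    intro a b pp hp ha
    have hp0 : 0 < pp := hε.trans hp
    rw [abs_div, abs_mul, abs_pow, abs_of_pos hp0, div_le_iff₀ (by positivity)]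
    have hpp : ε^2 ≤ pp^2 := by nlinarith
    calc |a| * |b| ≤ |b| := mul_le_of_le_one_left (abs_nonneg b) ha
      _ = 1/ε^2 * |b| * ε^2 := by field_simp [hε.ne']
      _ ≤ 1/ε^2 * |b| * pp^2 := mul_le_mul_of_nonneg_left hpp (by positivity)
  have hZmpabs : ∀ᵐ ω ∂μ, |Z ω - π0 (X ω)| ≤ 1 := by
    filter_upwards [hpae] with ω h
    rcases hZval ω with hz | hz <;> rw [hz, abs_le] <;> constructor <;>
      linarith [h.1, h.2, hε]
  -- more L² and integrability facts
  have hGc2 : MemLp (fun ω => gstar (X ω) - c) 2 μ := hgstarL2.sub (memLp_const c)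
  have hYGL2 : MemLp (fun ω => Y ω - gstar (X ω)) 2 μ := hYL2.sub hgstarL2
  have hYGint : Integrable (fun ω => Y ω - gstar (X ω)) μ := hYint.sub hGint
  have hZYGint : Integrable (fun ω => Z ω * (Y ω - gstar (X ω))) μ := by
    refine aipw_bdd_mul_int (C := 1) (hZ.mul (hY.sub hGmeas)).aestronglyMeasurable hYGint ?_
    refine Filter.Eventually.of_forall fun ω => ?_
    rw [abs_mul, one_mul]
    exact mul_le_of_le_one_left (abs_nonneg _) (hZabs ω)
  have hYG2int : Integrable (fun ω => (Y ω - gstar (X ω))^2) μ := hYGL2.integrable_sq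
  have hZYG2int : Integrable (fun ω => Z ω * (Y ω - gstar (X ω))^2) μ := by
    refine aipw_bdd_mul_int (C := 1)
      (hZ.mul ((hY.sub hGmeas).pow_const 2)).aestronglyMeasurable hYG2int ?_
    refine Filter.Eventually.of_forall fun ω => ?_
    rw [abs_mul, one_mul]
    exact mul_le_of_le_one_left (abs_nonneg _) (hZabs ω)
  have hT2 : MemLp (fun ω => Z ω * (Y ω - gstar (X ω)) / π0 (X ω)) 2 μ := by
    refine MemLp.of_le_mul (c := 1/ε) hYGL2
      ((hZ.mul (hY.sub hGmeas)).div hpmeas).aestronglyMeasurable ?_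
    filter_upwards [hpae] with ω h
    rw [Real.norm_eq_abs, Real.norm_eq_abs]
    exact key_bd _ _ _ h.1 (hZabs ω)
  have hAL2 : MemLp A 2 μ := by rw [hA]; exact hGc2.add hT2
  have hAmeas : Measurable A := by
    rw [hA]; exact (hGmeas.sub measurable_const).add ((hZ.mul (hY.sub hGmeas)).div hpmeas)
  have hA2int : Integrable (fun ω => (A ω)^2) μ := hAL2.integrable_sq
  -- the A² computation
  have hφ3m : StronglyMeasurable[MeasurableSpace.comap X inferInstance]
      (fun ω => (gstar (X ω) - c) / π0 (X ω)) :=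
    (((hgstarmeas.comp hXm).sub measurable_const).div (hπ0meas.comp hXm)).stronglyMeasurable
  have hφ4m : StronglyMeasurable[MeasurableSpace.comap X inferInstance]
      (fun ω => 1 / π0 (X ω)^2) :=
    (measurable_const.div ((hπ0meas.comp hXm).pow_const 2)).stronglyMeasurable
  have i2int : Integrable (fun ω => ((gstar (X ω) - c) / π0 (X ω))
      * (Z ω * (Y ω - gstar (X ω)))) μ := by
    have hb : Integrable (fun ω => (gstar (X ω) - c) * (Y ω - gstar (X ω))) μ :=
      aipw_l2_mul_integrable hGc2 hYGL2
    refine aipw_bdd_mul_int (C := 1/ε) ((((hGmeas.sub measurable_const).div hpmeas)).mul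
      (hZ.mul (hY.sub hGmeas))).aestronglyMeasurable hb ?_
    filter_upwards [hpae] with ω h
    have e : (gstar (X ω) - c) / π0 (X ω) * (Z ω * (Y ω - gstar (X ω)))
        = Z ω * ((gstar (X ω) - c) * (Y ω - gstar (X ω))) / π0 (X ω) := by ring
    rw [e]
    exact key_bd _ _ _ h.1 (hZabs ω)
  have i3int : Integrable (fun ω => (1 / π0 (X ω)^2)
      * (Z ω * (Y ω - gstar (X ω))^2)) μ := by
    refine aipw_bdd_mul_int (C := 1/ε^2) ((measurable_const.div (hpmeas.pow_const 2)).mul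
      (hZ.mul ((hY.sub hGmeas).pow_const 2))).aestronglyMeasurable hYG2int ?_
    filter_upwards [hpae] with ω h
    have e : (1 / π0 (X ω)^2) * (Z ω * (Y ω - gstar (X ω))^2)
        = Z ω * (Y ω - gstar (X ω))^2 / π0 (X ω)^2 := by ring
    rw [e]
    exact key_bd2 _ _ _ h.1 (hZabs ω)
  have hA_sq : ∫ ω, (A ω)^2 ∂μ
      = (∫ ω, (gstar (X ω) - c)^2 ∂μ) + ∫ ω, v (X ω) / π0 (X ω) ∂μ := by
    have hpt : ∀ ω, (A ω)^2 = (gstar (X ω) - c)^2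
        + (2 * (((gstar (X ω) - c) / π0 (X ω)) * (Z ω * (Y ω - gstar (X ω))))
          + (1 / π0 (X ω)^2) * (Z ω * (Y ω - gstar (X ω))^2)) := by
      intro ω
      simp only [hA]
      linear_combination ((Y ω - gstar (X ω))^2 / (π0 (X ω))^2) * hZsq ω
    have h0 : ∫ ω, (A ω)^2 ∂μ = ∫ ω, ((gstar (X ω) - c)^2
        + (2 * (((gstar (X ω) - c) / π0 (X ω)) * (Z ω * (Y ω - gstar (X ω))))
          + (1 / π0 (X ω)^2) * (Z ω * (Y ω - gstar (X ω))^2))) ∂μ :=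
      integral_congr_ae (Filter.Eventually.of_forall fun ω => hpt ω)
    have hsum : Integrable (fun ω => 2 * (((gstar (X ω) - c) / π0 (X ω))
        * (Z ω * (Y ω - gstar (X ω))))
        + (1 / π0 (X ω)^2) * (Z ω * (Y ω - gstar (X ω))^2)) μ :=
      (i2int.const_mul 2).add i3int
    rw [h0, integral_add hGc2.integrable_sq hsum,
      integral_add (i2int.const_mul 2) i3int, integral_const_mul,
      aipw_pullout_zero hm hφ3m i2int hZYGint hYGcond,
      aipw_pullout hm hφ4m i3int hZYG2int hYG2cond]
    have e2 : ∫ ω, (1 / π0 (X ω)^2) * (v (X ω) * π0 (X ω)) ∂μ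
        = ∫ ω, v (X ω) / π0 (X ω) ∂μ := by
      refine integral_congr_ae ?_
      filter_upwards [hpae] with ω h
      have hp0 : π0 (X ω) ≠ 0 := (hε.trans h.1).ne'
      field_simp
    rw [e2]
    ring
  -- the general decomposition
  have key : ∀ g : 𝓧 → ℝ, Measurable g → MemLp (fun ω => g (X ω)) 2 μ →
      ∫ ω, (Z ω * Y ω / π0 (X ω) - (Z ω - π0 (X ω)) / π0 (X ω) * g (X ω) - c) ^ 2 ∂μ
        = ∫ ω, (A ω)^2 ∂μ
          + ∫ ω, ((Z ω - π0 (X ω)) / π0 (X ω) * (gstar (X ω) - g (X ω)))^2 ∂μ := by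
    intro g hgmeas hgL2
    have hKL2 : MemLp (fun ω => gstar (X ω) - g (X ω)) 2 μ := hgstarL2.sub hgL2
    have hKmeas : Measurable (fun ω => gstar (X ω) - g (X ω)) :=
      hGmeas.sub (hgmeas.comp hX)
    have hBmeas : Measurable (fun ω => (Z ω - π0 (X ω)) / π0 (X ω)
        * (gstar (X ω) - g (X ω))) := ((hZ.sub hpmeas).div hpmeas).mul hKmeas
    have hBL2 : MemLp (fun ω => (Z ω - π0 (X ω)) / π0 (X ω)
        * (gstar (X ω) - g (X ω))) 2 μ := by
      refine MemLp.of_le_mul (c := 1/ε) hKL2 hBmeas.aestronglyMeasurable ?_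
      filter_upwards [hpae, hZmpabs] with ω h hzp
      rw [Real.norm_eq_abs, Real.norm_eq_abs]
      have e : (Z ω - π0 (X ω)) / π0 (X ω) * (gstar (X ω) - g (X ω))
          = (Z ω - π0 (X ω)) * (gstar (X ω) - g (X ω)) / π0 (X ω) := by ring
      rw [e]
      exact key_bd _ _ _ h.1 hzp
    have hABint : Integrable (fun ω => A ω * ((Z ω - π0 (X ω)) / π0 (X ω)
        * (gstar (X ω) - g (X ω)))) μ := aipw_l2_mul_integrable hAL2 hBL2
    -- pointwise identity
    have hpt : ∀ᵐ ω ∂μ, Z ω * Y ω / π0 (X ω) - (Z ω - π0 (X ω)) / π0 (X ω) * g (X ω) - c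
        = A ω + (Z ω - π0 (X ω)) / π0 (X ω) * (gstar (X ω) - g (X ω)) := by
      filter_upwards [hpae] with ω h
      have hp0 : π0 (X ω) ≠ 0 := (hε.trans h.1).ne'
      simp only [hA]
      field_simp
      ring
    have h0 : ∫ ω, (Z ω * Y ω / π0 (X ω) - (Z ω - π0 (X ω)) / π0 (X ω) * g (X ω) - c) ^ 2 ∂μ
        = ∫ ω, (A ω + (Z ω - π0 (X ω)) / π0 (X ω) * (gstar (X ω) - g (X ω)))^2 ∂μ := by
      refine integral_congr_ae ?_
      filter_upwards [hpt] with ω e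
      rw [e]
    -- cross term is zero
    have hφ1m : StronglyMeasurable[MeasurableSpace.comap X inferInstance]
        (fun ω => (gstar (X ω) - c) * (gstar (X ω) - g (X ω)) / π0 (X ω)) := by
      have hGmm := hgstarmeas.comp hXm
      exact (((hGmm.sub measurable_const).mul (hGmm.sub (hgmeas.comp hXm))).div
        (hπ0meas.comp hXm)).stronglyMeasurable
    have hφ2m : StronglyMeasurable[MeasurableSpace.comap X inferInstance]
        (fun ω => (1 - π0 (X ω)) * (gstar (X ω) - g (X ω)) / π0 (X ω)^2) := by
      have hpmm := hπ0meas.comp hXm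
      exact (((measurable_const.sub hpmm).mul
        ((hgstarmeas.comp hXm).sub (hgmeas.comp hXm))).div (hpmm.pow_const 2)).stronglyMeasurable
    have j1int : Integrable (fun ω => ((gstar (X ω) - c) * (gstar (X ω) - g (X ω)) / π0 (X ω))
        * (Z ω - π0 (X ω))) μ := by
      have hb : Integrable (fun ω => (gstar (X ω) - c) * (gstar (X ω) - g (X ω))) μ :=
        aipw_l2_mul_integrable hGc2 hKL2
      refine aipw_bdd_mul_int (C := 1/ε)
        ((((hGmeas.sub measurable_const).mul hKmeas).div hpmeas).mul
          (hZ.sub hpmeas)).aestronglyMeasurable hb ?_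
      filter_upwards [hpae, hZmpabs] with ω h hzp
      have e : (gstar (X ω) - c) * (gstar (X ω) - g (X ω)) / π0 (X ω) * (Z ω - π0 (X ω))
          = (Z ω - π0 (X ω)) * ((gstar (X ω) - c) * (gstar (X ω) - g (X ω))) / π0 (X ω) := by
        ring
      rw [e]
      exact key_bd _ _ _ h.1 hzp
    have j2int : Integrable (fun ω => ((1 - π0 (X ω)) * (gstar (X ω) - g (X ω)) / π0 (X ω)^2)
        * (Z ω * (Y ω - gstar (X ω)))) μ := by
      have hb : Integrable (fun ω => (gstar (X ω) - g (X ω)) * (Y ω - gstar (X ω))) μ :=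
        aipw_l2_mul_integrable hKL2 hYGL2
      refine aipw_bdd_mul_int (C := 1/ε^2)
        ((((measurable_const.sub hpmeas).mul hKmeas).div (hpmeas.pow_const 2)).mul
          (hZ.mul (hY.sub hGmeas))).aestronglyMeasurable hb ?_
      filter_upwards [hpae] with ω h
      have e : (1 - π0 (X ω)) * (gstar (X ω) - g (X ω)) / π0 (X ω)^2
            * (Z ω * (Y ω - gstar (X ω)))
          = ((1 - π0 (X ω)) * Z ω)
            * ((gstar (X ω) - g (X ω)) * (Y ω - gstar (X ω))) / π0 (X ω)^2 := by ring
      rw [e]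
      refine key_bd2 _ _ _ h.1 ?_
      rw [abs_mul]
      have h1 : |1 - π0 (X ω)| ≤ 1 := by
        rw [abs_le]; constructor <;> linarith [h.1, h.2, hε]
      calc |1 - π0 (X ω)| * |Z ω| ≤ 1 * 1 :=
            mul_le_mul h1 (hZabs ω) (abs_nonneg _) zero_le_one
        _ = 1 := by norm_num
    have hcross : ∫ ω, A ω * ((Z ω - π0 (X ω)) / π0 (X ω)
        * (gstar (X ω) - g (X ω))) ∂μ = 0 := by
      have hpt2 : ∀ ω, A ω * ((Z ω - π0 (X ω)) / π0 (X ω) * (gstar (X ω) - g (X ω)))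
          = ((gstar (X ω) - c) * (gstar (X ω) - g (X ω)) / π0 (X ω)) * (Z ω - π0 (X ω))
            + ((1 - π0 (X ω)) * (gstar (X ω) - g (X ω)) / π0 (X ω)^2)
              * (Z ω * (Y ω - gstar (X ω))) := by
        intro ω
        simp only [hA]
        linear_combination ((gstar (X ω) - g (X ω)) * (Y ω - gstar (X ω)) / (π0 (X ω))^2)
          * hZsq ω
      have h1 : ∫ ω, A ω * ((Z ω - π0 (X ω)) / π0 (X ω) * (gstar (X ω) - g (X ω))) ∂μ
          = ∫ ω, (((gstar (X ω) - c) * (gstar (X ω) - g (X ω)) / π0 (X ω)) * (Z ω - π0 (X ω))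
            + ((1 - π0 (X ω)) * (gstar (X ω) - g (X ω)) / π0 (X ω)^2)
              * (Z ω * (Y ω - gstar (X ω)))) ∂μ :=
        integral_congr_ae (Filter.Eventually.of_forall fun ω => hpt2 ω)
      rw [h1, integral_add j1int j2int,
        aipw_pullout_zero hm hφ1m j1int (hZint.sub hpint) hZmp,
        aipw_pullout_zero hm hφ2m j2int hZYGint hYGcond]
      norm_num
    -- expand the square
    have hexp : ∫ ω, (A ω + (Z ω - π0 (X ω)) / π0 (X ω) * (gstar (X ω) - g (X ω)))^2 ∂μ
        = ∫ ω, ((A ω)^2 + (2 * (A ω * ((Z ω - π0 (X ω)) / π0 (X ω)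
            * (gstar (X ω) - g (X ω))))
          + ((Z ω - π0 (X ω)) / π0 (X ω) * (gstar (X ω) - g (X ω)))^2)) ∂μ :=
      integral_congr_ae (Filter.Eventually.of_forall fun ω => by ring)
    have hsum2 : Integrable (fun ω => 2 * (A ω * ((Z ω - π0 (X ω)) / π0 (X ω)
        * (gstar (X ω) - g (X ω))))
        + ((Z ω - π0 (X ω)) / π0 (X ω) * (gstar (X ω) - g (X ω)))^2) μ :=
      (hABint.const_mul 2).add hBL2.integrable_sq
    rw [h0, hexp, integral_add hA2int hsum2,
      integral_add (hABint.const_mul 2) hBL2.integrable_sq, integral_const_mul, hcross]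
    ring
  -- assemble
  have hstar : ∫ ω, (Z ω * Y ω / π0 (X ω) - (Z ω - π0 (X ω)) / π0 (X ω) * gstar (X ω) - c) ^ 2 ∂μ
      = ∫ ω, (A ω)^2 ∂μ := by
    rw [key gstar hgstarmeas hgstarL2]
    have : ∫ ω, ((Z ω - π0 (X ω)) / π0 (X ω) * (gstar (X ω) - gstar (X ω)))^2 ∂μ = 0 := by
      simp
    rw [this, add_zero]
  constructor
  · intro g hgmeas hgL2
    rw [hstar, key g hgmeas hgL2]
    have h0 : 0 ≤ ∫ ω, ((Z ω - π0 (X ω)) / π0 (X ω) * (gstar (X ω) - g (X ω)))^2 ∂μ :=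
      integral_nonneg fun ω => sq_nonneg _
    linarith
  · rw [hstar, hA_sq]
end

section
/- With Z = 1{A=d(X)}, π₀(X) = P(Z=1|X), and g*(X) = E[Y|X,Z=1], the conditional variance of the centered AIPW function given X satisfies Var( ZY/π₀ − (Z−π₀)/π₀·g(X) | X ) = Var( ZY/π₀ − (Z−π₀)/π₀·g*(X) | X ) + ((1−π₀)/π₀)·(g(X) − g*(X))² for every square-integrable function g of X. -/
open MeasureTheory ProbabilityTheory

private lemma aux_mul_int {Ω : Type*} [MeasurableSpace Ω] {μ : Measure Ω} {c f b : Ω → ℝ}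
    (hc : AEStronglyMeasurable c μ) (hf : AEStronglyMeasurable f μ) (hb : Integrable b μ)
    (h : ∀ᵐ ω ∂μ, |c ω * f ω| ≤ b ω) : Integrable (fun ω => c ω * f ω) μ := by
  refine hb.mono' (hc.mul hf) ?_
  filter_upwards [h] with ω h
  rw [Real.norm_eq_abs]; exact h

set_option maxHeartbeats 1000000 in
/-- With `Z ∈ {0,1}`, `π₀(X) = P(Z=1|X) ∈ (ε,1-ε)` and
`g*(X) = E[Y|X,Z=1]`, the conditional variance of the AIPW function given `X`
satisfies, for every square-integrable `g` of `X`,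
`Var(ZY/π₀ - (Z-π₀)/π₀·g(X) | X) = Var(ZY/π₀ - (Z-π₀)/π₀·g*(X) | X)
   + ((1-π₀)/π₀)·(g(X) - g*(X))²` a.s. -/
theorem aipw_conditional_variance_decomposition
    {Ω 𝓧 : Type*} [MeasurableSpace Ω] [StandardBorelSpace Ω] [Nonempty Ω]
    [MeasurableSpace 𝓧]
    (μ : Measure Ω) [IsProbabilityMeasure μ]
    (X : Ω → 𝓧) (hX : Measurable X)
    (Z : Ω → ℝ) (hZ : Measurable Z) (hZval : ∀ ω, Z ω = 0 ∨ Z ω = 1)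
    (Y : Ω → ℝ) (hY : Measurable Y) (hYL2 : MemLp Y 2 μ)
    (π0 : 𝓧 → ℝ) (hπ0meas : Measurable π0)
    (hπ0 : (fun ω => π0 (X ω)) =ᵐ[μ] μ[Z | MeasurableSpace.comap X inferInstance])
    (ε : ℝ) (hε : 0 < ε)
    (hπ0pos : ∀ᵐ ω ∂μ, ε < π0 (X ω) ∧ π0 (X ω) < 1 - ε)
    -- g*(X) = E[Y | X, Z=1]: characterized by E[ZY|X] = g*(X)·π₀(X) a.s.
    (gstar : 𝓧 → ℝ) (hgstarmeas : Measurable gstar)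
    (hgstarL2 : MemLp (fun ω => gstar (X ω)) 2 μ)
    (hgstar : μ[(fun ω => Z ω * Y ω) | MeasurableSpace.comap X inferInstance]
      =ᵐ[μ] fun ω => gstar (X ω) * π0 (X ω)) :
    ∀ g : 𝓧 → ℝ, Measurable g → MemLp (fun ω => g (X ω)) 2 μ →
      (fun ω =>
        (μ[(fun ω' => (Z ω' * Y ω' / π0 (X ω')
            - (Z ω' - π0 (X ω')) / π0 (X ω') * g (X ω')) ^ 2) |
          MeasurableSpace.comap X inferInstance]) ω
        - ((μ[(fun ω' => Z ω' * Y ω' / π0 (X ω')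
            - (Z ω' - π0 (X ω')) / π0 (X ω') * g (X ω')) |
          MeasurableSpace.comap X inferInstance]) ω) ^ 2)
      =ᵐ[μ] fun ω =>
        ((μ[(fun ω' => (Z ω' * Y ω' / π0 (X ω')
            - (Z ω' - π0 (X ω')) / π0 (X ω') * gstar (X ω')) ^ 2) |
          MeasurableSpace.comap X inferInstance]) ω
        - ((μ[(fun ω' => Z ω' * Y ω' / π0 (X ω')
            - (Z ω' - π0 (X ω')) / π0 (X ω') * gstar (X ω')) |
          MeasurableSpace.comap X inferInstance]) ω) ^ 2)
        + (1 - π0 (X ω)) / π0 (X ω) * (g (X ω) - gstar (X ω)) ^ 2 := by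
  intro g hgmeas hgL2
  have hm : MeasurableSpace.comap X inferInstance ≤ ‹MeasurableSpace Ω› := hX.comap_le
  haveI : SigmaFinite (μ.trim hm) := inferInstance
  have hXm : Measurable[MeasurableSpace.comap X inferInstance] X := comap_measurable X
  have hZ1 : ∀ ω, |Z ω| ≤ 1 := fun ω => by rcases hZval ω with h | h <;> simp [h]
  have hYint : Integrable Y μ := hYL2.integrable one_le_two
  have hYsq : Integrable (fun ω => Y ω ^ 2) μ := hYL2.integrable_sq
  have hZint : Integrable Z μ := by
    refine (integrable_const (1 : ℝ)).mono' hZ.aestronglyMeasurable ?_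
    filter_upwards with ω
    rw [Real.norm_eq_abs]; exact hZ1 ω
  have hkey : ∀ᵐ ω ∂μ, 0 < π0 (X ω) ∧ 1 / π0 (X ω) ≤ 1 / ε ∧ 1 / π0 (X ω) ^ 2 ≤ 1 / ε ^ 2 := by
    filter_upwards [hπ0pos] with ω hω
    have hp : 0 < π0 (X ω) := hε.trans hω.1
    exact ⟨hp, one_div_le_one_div_of_le hε hω.1.le,
      one_div_le_one_div_of_le (by positivity) (by nlinarith [hω.1])⟩
  have hAint : Integrable (fun ω => Z ω * Y ω ^ 2) μ := by
    refine aux_mul_int hZ.aestronglyMeasurable (hY.pow_const 2).aestronglyMeasurable hYsq ?_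
    filter_upwards with ω
    rw [abs_mul, abs_of_nonneg (sq_nonneg (Y ω))]
    exact mul_le_of_le_one_left (sq_nonneg _) (hZ1 ω)
  have hBint : Integrable (fun ω => Z ω * Y ω) μ := by
    refine aux_mul_int hZ.aestronglyMeasurable hY.aestronglyMeasurable hYint.abs ?_
    filter_upwards with ω
    rw [abs_mul]
    exact mul_le_of_le_one_left (abs_nonneg _) (hZ1 ω)
  have hπXm : Measurable[MeasurableSpace.comap X inferInstance] fun ω => π0 (X ω) := hπ0meas.comp hXm
  have hπX : Measurable fun ω => π0 (X ω) := hπ0meas.comp hX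
  have main : ∀ G : 𝓧 → ℝ, Measurable G → MemLp (fun ω => G (X ω)) 2 μ →
      ((μ[(fun ω' => Z ω' * Y ω' / π0 (X ω') - (Z ω' - π0 (X ω')) / π0 (X ω') * G (X ω')) |
          MeasurableSpace.comap X inferInstance])
          =ᵐ[μ] fun ω => gstar (X ω))
      ∧ ((μ[(fun ω' => (Z ω' * Y ω' / π0 (X ω') - (Z ω' - π0 (X ω')) / π0 (X ω') * G (X ω')) ^ 2) |
          MeasurableSpace.comap X inferInstance])
          =ᵐ[μ] fun ω => (μ[(fun ω' => Z ω' * Y ω' ^ 2) | MeasurableSpace.comap X inferInstance]) ω / π0 (X ω) ^ 2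
              + 2 * G (X ω) * gstar (X ω) - 2 * G (X ω) * gstar (X ω) / π0 (X ω)
              + G (X ω) ^ 2 / π0 (X ω) - G (X ω) ^ 2) := by
    intro G hG hGL2
    have hGint : Integrable (fun ω => G (X ω)) μ := hGL2.integrable one_le_two
    have hGsq : Integrable (fun ω => G (X ω) ^ 2) μ := hGL2.integrable_sq
    have hGX : Measurable fun ω => G (X ω) := hG.comp hX
    have hGXm : Measurable[MeasurableSpace.comap X inferInstance] fun ω => G (X ω) := hG.comp hXm
    -- integrability of mean pieces
    have iQ1 : Integrable ((fun ω => 1 / π0 (X ω)) * (fun ω => Z ω * Y ω)) μ := by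
      refine aux_mul_int (measurable_const.div hπX).aestronglyMeasurable
        (hZ.mul hY).aestronglyMeasurable (hYint.abs.const_mul (1 / ε)) ?_
      filter_upwards [hkey] with ω hω
      obtain ⟨hp, h1, h2⟩ := hω
      rw [abs_mul, abs_mul, abs_of_nonneg (by positivity : (0:ℝ) ≤ 1 / π0 (X ω))]
      have hzy : |Z ω| * |Y ω| ≤ |Y ω| := mul_le_of_le_one_left (abs_nonneg _) (hZ1 ω)
      calc 1 / π0 (X ω) * (|Z ω| * |Y ω|) ≤ 1 / π0 (X ω) * |Y ω| :=
            mul_le_mul_of_nonneg_left hzy (by positivity)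
        _ ≤ 1 / ε * |Y ω| := mul_le_mul_of_nonneg_right h1 (abs_nonneg _)
    have iQ2 : Integrable ((fun ω => -G (X ω) / π0 (X ω)) * Z) μ := by
      refine aux_mul_int ((hGX.neg).div hπX).aestronglyMeasurable
        hZ.aestronglyMeasurable (hGint.abs.const_mul (1 / ε)) ?_
      filter_upwards [hkey] with ω hω
      obtain ⟨hp, h1, h2⟩ := hω
      rw [abs_mul, abs_div, abs_neg, abs_of_pos hp]
      have h3 : |G (X ω)| / π0 (X ω) * |Z ω| ≤ |G (X ω)| / π0 (X ω) :=
        mul_le_of_le_one_right (by positivity) (hZ1 ω)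
      have h4 : |G (X ω)| * (1 / π0 (X ω)) ≤ |G (X ω)| * (1 / ε) :=
        mul_le_mul_of_nonneg_left h1 (abs_nonneg _)
      have h5 : |G (X ω)| / π0 (X ω) = |G (X ω)| * (1 / π0 (X ω)) := by ring
      rw [h5] at h3 ⊢
      calc |G (X ω)| * (1 / π0 (X ω)) * |Z ω| ≤ |G (X ω)| * (1 / π0 (X ω)) := h3
        _ ≤ |G (X ω)| * (1 / ε) := h4
        _ = 1 / ε * |G (X ω)| := by ring
    -- m-strong-measurability of coefficients
    have sm1 : StronglyMeasurable[MeasurableSpace.comap X inferInstance] fun ω => 1 / π0 (X ω) :=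
      (measurable_const.div hπXm).stronglyMeasurable
    have sm2 : StronglyMeasurable[MeasurableSpace.comap X inferInstance] fun ω => -G (X ω) / π0 (X ω) :=
      ((hGXm.neg).div hπXm).stronglyMeasurable
    -- mean decomposition
    have hmean_eq : (fun ω' => Z ω' * Y ω' / π0 (X ω') - (Z ω' - π0 (X ω')) / π0 (X ω') * G (X ω'))
        =ᵐ[μ] ((fun ω => 1 / π0 (X ω)) * (fun ω => Z ω * Y ω)
            + ((fun ω => -G (X ω) / π0 (X ω)) * Z + fun ω => G (X ω))) := by
      filter_upwards [hkey] with ω hω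
      obtain ⟨hp, -, -⟩ := hω
      simp only [Pi.add_apply, Pi.mul_apply]
      field_simp
      ring
    have h0 := condExp_congr_ae (m := MeasurableSpace.comap X inferInstance) hmean_eq
    have h1 := condExp_add (m := MeasurableSpace.comap X inferInstance) (μ := μ) iQ1 (iQ2.add hGint)
    have h2 := condExp_add (m := MeasurableSpace.comap X inferInstance) (μ := μ) iQ2 hGint
    have h3 := condExp_mul_of_stronglyMeasurable_left sm1 iQ1 hBint
    have h4 := condExp_mul_of_stronglyMeasurable_left sm2 iQ2 hZint
    have h5 : μ[(fun ω => G (X ω)) | MeasurableSpace.comap X inferInstance] = fun ω => G (X ω) :=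
      condExp_of_stronglyMeasurable hm hGXm.stronglyMeasurable hGint
    have hmean : (μ[(fun ω' => Z ω' * Y ω' / π0 (X ω') - (Z ω' - π0 (X ω')) / π0 (X ω') * G (X ω')) |
          MeasurableSpace.comap X inferInstance]) =ᵐ[μ] fun ω => gstar (X ω) := by
      filter_upwards [h0, h1, h2, h3, h4, hgstar, hπ0, hkey] with ω e0 e1 e2 e3 e4 e5 e6 hω
      obtain ⟨hp, -, -⟩ := hω
      simp only [Pi.add_apply, Pi.mul_apply] at e0 e1 e2 e3 e4
      rw [e0, e1, e2, e3, e4, e5, h5, ← e6]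
      field_simp
      ring
    refine ⟨hmean, ?_⟩
    -- square part
    -- coefficients
    have iP1 : Integrable ((fun ω => 1 / π0 (X ω) ^ 2) * (fun ω => Z ω * Y ω ^ 2)) μ := by
      refine aux_mul_int (measurable_const.div (hπX.pow_const 2)).aestronglyMeasurable
        (hZ.mul (hY.pow_const 2)).aestronglyMeasurable (hYsq.const_mul (1 / ε ^ 2)) ?_
      filter_upwards [hkey] with ω hω
      obtain ⟨hp, h1, h2⟩ := hω
      rw [abs_mul, abs_mul, abs_of_nonneg (by positivity : (0:ℝ) ≤ 1 / π0 (X ω) ^ 2),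
        abs_of_nonneg (sq_nonneg (Y ω))]
      have hzy : |Z ω| * Y ω ^ 2 ≤ Y ω ^ 2 := mul_le_of_le_one_left (sq_nonneg _) (hZ1 ω)
      calc 1 / π0 (X ω) ^ 2 * (|Z ω| * Y ω ^ 2) ≤ 1 / π0 (X ω) ^ 2 * Y ω ^ 2 :=
            mul_le_mul_of_nonneg_left hzy (by positivity)
        _ ≤ 1 / ε ^ 2 * Y ω ^ 2 := mul_le_mul_of_nonneg_right h2 (sq_nonneg _)
    have iP2 : Integrable ((fun ω => 2 * G (X ω) / π0 (X ω) - 2 * G (X ω) / π0 (X ω) ^ 2)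
        * (fun ω => Z ω * Y ω)) μ := by
      refine aux_mul_int ((((hGX.const_mul 2).div hπX)).sub
          ((hGX.const_mul 2).div (hπX.pow_const 2))).aestronglyMeasurable
        (hZ.mul hY).aestronglyMeasurable ((hGsq.add hYsq).const_mul (2 / ε + 2 / ε ^ 2)) ?_
      filter_upwards [hkey] with ω hω
      obtain ⟨hp, h1, h2⟩ := hω
      have hc2 : |2 * G (X ω) / π0 (X ω) - 2 * G (X ω) / π0 (X ω) ^ 2|
          ≤ (2 / ε + 2 / ε ^ 2) * |G (X ω)| := by
        refine (abs_sub _ _).trans ?_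
        have a1 : |2 * G (X ω) / π0 (X ω)| = 2 * |G (X ω)| * (1 / π0 (X ω)) := by
          rw [abs_div, abs_of_pos hp, abs_mul, abs_two]; ring
        have a2 : |2 * G (X ω) / π0 (X ω) ^ 2| = 2 * |G (X ω)| * (1 / π0 (X ω) ^ 2) := by
          rw [abs_div, abs_of_pos (by positivity : (0:ℝ) < π0 (X ω) ^ 2), abs_mul, abs_two]; ring
        rw [a1, a2]
        have b1 : 2 * |G (X ω)| * (1 / π0 (X ω)) ≤ 2 * |G (X ω)| * (1 / ε) :=
          mul_le_mul_of_nonneg_left h1 (by positivity)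
        have b2 : 2 * |G (X ω)| * (1 / π0 (X ω) ^ 2) ≤ 2 * |G (X ω)| * (1 / ε ^ 2) :=
          mul_le_mul_of_nonneg_left h2 (by positivity)
        calc 2 * |G (X ω)| * (1 / π0 (X ω)) + 2 * |G (X ω)| * (1 / π0 (X ω) ^ 2)
            ≤ 2 * |G (X ω)| * (1 / ε) + 2 * |G (X ω)| * (1 / ε ^ 2) := add_le_add b1 b2
          _ = (2 / ε + 2 / ε ^ 2) * |G (X ω)| := by ring
      rw [abs_mul]
      have hzy : |Z ω * Y ω| ≤ |Y ω| := by
        rw [abs_mul]; exact mul_le_of_le_one_left (abs_nonneg _) (hZ1 ω)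
      have hGY : |G (X ω)| * |Y ω| ≤ G (X ω) ^ 2 + Y ω ^ 2 := by
        nlinarith [sq_abs (G (X ω)), sq_abs (Y ω), sq_nonneg (|G (X ω)| - |Y ω|)]
      calc |2 * G (X ω) / π0 (X ω) - 2 * G (X ω) / π0 (X ω) ^ 2| * |Z ω * Y ω|
          ≤ (2 / ε + 2 / ε ^ 2) * |G (X ω)| * |Y ω| :=
            mul_le_mul hc2 hzy (abs_nonneg _) (by positivity)
        _ = (2 / ε + 2 / ε ^ 2) * (|G (X ω)| * |Y ω|) := by ring
        _ ≤ (2 / ε + 2 / ε ^ 2) * (G (X ω) ^ 2 + Y ω ^ 2) :=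
            mul_le_mul_of_nonneg_left hGY (by positivity)
    have iP3 : Integrable ((fun ω => G (X ω) ^ 2 / π0 (X ω) ^ 2 - 2 * G (X ω) ^ 2 / π0 (X ω)) * Z) μ := by
      refine aux_mul_int (((hGX.pow_const 2).div (hπX.pow_const 2)).sub
          (((hGX.pow_const 2).const_mul 2).div hπX)).aestronglyMeasurable
        hZ.aestronglyMeasurable (hGsq.const_mul (1 / ε ^ 2 + 2 / ε)) ?_
      filter_upwards [hkey] with ω hω
      obtain ⟨hp, h1, h2⟩ := hω
      have hc3 : |G (X ω) ^ 2 / π0 (X ω) ^ 2 - 2 * G (X ω) ^ 2 / π0 (X ω)|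
          ≤ (1 / ε ^ 2 + 2 / ε) * G (X ω) ^ 2 := by
        refine (abs_sub _ _).trans ?_
        have a1 : |G (X ω) ^ 2 / π0 (X ω) ^ 2| = G (X ω) ^ 2 * (1 / π0 (X ω) ^ 2) := by
          rw [abs_div, abs_of_pos (by positivity : (0:ℝ) < π0 (X ω) ^ 2),
            abs_of_nonneg (sq_nonneg (G (X ω)))]; ring
        have a2 : |2 * G (X ω) ^ 2 / π0 (X ω)| = 2 * G (X ω) ^ 2 * (1 / π0 (X ω)) := by
          rw [abs_div, abs_of_pos hp, abs_mul, abs_two, abs_of_nonneg (sq_nonneg (G (X ω)))]; ring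
        rw [a1, a2]
        have b1 : G (X ω) ^ 2 * (1 / π0 (X ω) ^ 2) ≤ G (X ω) ^ 2 * (1 / ε ^ 2) :=
          mul_le_mul_of_nonneg_left h2 (sq_nonneg _)
        have b2 : 2 * G (X ω) ^ 2 * (1 / π0 (X ω)) ≤ 2 * G (X ω) ^ 2 * (1 / ε) :=
          mul_le_mul_of_nonneg_left h1 (by positivity)
        calc G (X ω) ^ 2 * (1 / π0 (X ω) ^ 2) + 2 * G (X ω) ^ 2 * (1 / π0 (X ω))
            ≤ G (X ω) ^ 2 * (1 / ε ^ 2) + 2 * G (X ω) ^ 2 * (1 / ε) := add_le_add b1 b2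
          _ = (1 / ε ^ 2 + 2 / ε) * G (X ω) ^ 2 := by ring
      rw [abs_mul]
      calc |G (X ω) ^ 2 / π0 (X ω) ^ 2 - 2 * G (X ω) ^ 2 / π0 (X ω)| * |Z ω|
          ≤ |G (X ω) ^ 2 / π0 (X ω) ^ 2 - 2 * G (X ω) ^ 2 / π0 (X ω)| :=
            mul_le_of_le_one_right (abs_nonneg _) (hZ1 ω)
        _ ≤ (1 / ε ^ 2 + 2 / ε) * G (X ω) ^ 2 := hc3
    -- strong measurability of square coefficients
    have sq1 : StronglyMeasurable[MeasurableSpace.comap X inferInstance] fun ω => 1 / π0 (X ω) ^ 2 :=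
      (measurable_const.div (hπXm.pow_const 2)).stronglyMeasurable
    have sq2 : StronglyMeasurable[MeasurableSpace.comap X inferInstance]
        fun ω => 2 * G (X ω) / π0 (X ω) - 2 * G (X ω) / π0 (X ω) ^ 2 :=
      ((((hGXm.const_mul 2).div hπXm)).sub
        ((hGXm.const_mul 2).div (hπXm.pow_const 2))).stronglyMeasurable
    have sq3 : StronglyMeasurable[MeasurableSpace.comap X inferInstance]
        fun ω => G (X ω) ^ 2 / π0 (X ω) ^ 2 - 2 * G (X ω) ^ 2 / π0 (X ω) :=
      (((hGXm.pow_const 2).div (hπXm.pow_const 2)).sub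
        (((hGXm.pow_const 2).const_mul 2).div hπXm)).stronglyMeasurable
    -- pointwise decomposition of the square
    have hsq_eq : (fun ω' => (Z ω' * Y ω' / π0 (X ω') - (Z ω' - π0 (X ω')) / π0 (X ω') * G (X ω')) ^ 2)
        =ᵐ[μ] ((fun ω => 1 / π0 (X ω) ^ 2) * (fun ω => Z ω * Y ω ^ 2)
          + ((fun ω => 2 * G (X ω) / π0 (X ω) - 2 * G (X ω) / π0 (X ω) ^ 2) * (fun ω => Z ω * Y ω)
          + ((fun ω => G (X ω) ^ 2 / π0 (X ω) ^ 2 - 2 * G (X ω) ^ 2 / π0 (X ω)) * Z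
            + fun ω => G (X ω) ^ 2))) := by
      filter_upwards [hkey] with ω hω
      obtain ⟨hp, -, -⟩ := hω
      simp only [Pi.add_apply, Pi.mul_apply]
      rcases hZval ω with h | h <;> rw [h] <;> field_simp <;> ring
    have k0 := condExp_congr_ae (m := MeasurableSpace.comap X inferInstance) hsq_eq
    have k1 := condExp_add (m := MeasurableSpace.comap X inferInstance) (μ := μ)
      iP1 (iP2.add (iP3.add hGsq))
    have k2 := condExp_add (m := MeasurableSpace.comap X inferInstance) (μ := μ)
      iP2 (iP3.add hGsq)
    have k3 := condExp_add (m := MeasurableSpace.comap X inferInstance) (μ := μ) iP3 hGsq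
    have k4 := condExp_mul_of_stronglyMeasurable_left sq1 iP1 hAint
    have k5 := condExp_mul_of_stronglyMeasurable_left sq2 iP2 hBint
    have k6 := condExp_mul_of_stronglyMeasurable_left sq3 iP3 hZint
    have k7 : μ[(fun ω => G (X ω) ^ 2) | MeasurableSpace.comap X inferInstance]
        = fun ω => G (X ω) ^ 2 :=
      condExp_of_stronglyMeasurable hm (hGXm.pow_const 2).stronglyMeasurable hGsq
    filter_upwards [k0, k1, k2, k3, k4, k5, k6, hgstar, hπ0, hkey]
      with ω e0 e1 e2 e3 e4 e5 e6 e7 e8 hω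
    obtain ⟨hp, -, -⟩ := hω
    simp only [Pi.add_apply, Pi.mul_apply] at e0 e1 e2 e3 e4 e5 e6
    rw [e0, e1, e2, e3, e4, e5, e6, e7, k7, ← e8]
    field_simp
    ring
  obtain ⟨mg, sg⟩ := main g hgmeas hgL2
  obtain ⟨mgs, sgs⟩ := main gstar hgstarmeas hgstarL2
  filter_upwards [mg, sg, mgs, sgs, hkey] with ω e1 e2 e3 e4 hω
  obtain ⟨hp, -, -⟩ := hω
  simp only [e1, e2, e3, e4]
  field_simp
  ring
end
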